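/- arXiv:1702.08621 — 4 statements merged into one kernel-verified Lean document; each statement's English description precedes it below -/
import Mathlib

section
/- For integers k > i ≥ 2 and all m, n ≥ 0, the number G̃_{k,i}(m,n) of overpartitions counted by Ẽ_{k,i}(m,n) whose smallest part is non-overlined equals the number H̃_{k,i−1}(m,n) of overpartitions counted by Ẽ_{k,i−1}(m,n) whose smallest part is overlined. -/
open scoped BigOperators

/-- A part of an overpartition: its size, and whether it is overlined. -/
abbrev OPart := ℕ × Bool

/-- An overpartition: `f t` is the number of non-overlined parts equal to `t`, and
`fbar t` is the number of overlined parts equal to `t` (at most one, since only the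
first occurrence of a number may be overlined).  There are no parts of size `0`. -/
structure Overpartition where
  f : ℕ →₀ ℕ
  fbar : ℕ →₀ ℕ
  fbar_le_one : ∀ t, fbar t ≤ 1
  f_zero : f 0 = 0
  fbar_zero : fbar 0 = 0

namespace Overpartition

/-- the number of parts -/
def parts (l : Overpartition) : ℕ :=
  l.f.sum (fun _ m => m) + l.fbar.sum (fun _ m => m)

/-- weight: the sum of all parts -/
def wt (l : Overpartition) : ℕ :=
  l.f.sum (fun t m => t * m) + l.fbar.sum (fun t m => t * m)

/-- `V l s`: the number of overlined parts of size at most `s` -/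
def V (l : Overpartition) (s : ℕ) : ℕ := ∑ t ∈ Finset.Icc 1 s, l.fbar t

end Overpartition

/-- The difference/congruence conditions defining `Õ_{k,i}`. -/
def OCond (k i : ℕ) (l : Overpartition) : Prop :=
  (l.fbar 1 + l.f 2 ≤ i - 1) ∧
  (∀ t, 1 ≤ t → l.f (2*t) + l.fbar (2*t) + l.fbar (2*t+1) + l.f (2*t+2) ≤ k - 1) ∧
  (∀ t, 1 ≤ l.f (2*t+1) → l.f (2*t+2) ≤ k - 2) ∧
  (∀ t, 1 ≤ t → l.f (2*t) + l.fbar (2*t) + l.fbar (2*t+1) + l.f (2*t+2) = k - 1 →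
    t * l.f (2*t) + t * l.fbar (2*t) + t * l.fbar (2*t+1) + (t+1) * l.f (2*t+2)
      ≡ l.V (2*t+1) + i - 1 [MOD 2]) ∧
  (∀ t, 1 ≤ l.f (2*t+1) → l.f (2*t+2) = k - 2 →
    t + (t+1) * l.f (2*t+2) ≡ l.V (2*t+1) + i - 1 [MOD 2])

/-- Non-overlined parts are not congruent to `0, ±(2i-1)` modulo `4k-4`. -/
def PCond (k i : ℕ) (l : Overpartition) : Prop :=
  ∀ t, 0 < l.f t →
    ¬ t ≡ 0 [MOD 4*k-4] ∧ ¬ t ≡ 2*i-1 [MOD 4*k-4] ∧ ¬ t ≡ 4*k-3-2*i [MOD 4*k-4]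

/-- The difference/congruence conditions defining `Ẽ_{k,i}`. -/
def ECond (k i : ℕ) (l : Overpartition) : Prop :=
  l.f 1 ≤ i - 1 ∧
  (∀ t, 1 ≤ t → l.f t + l.fbar t + l.f (t+1) ≤ k - 1) ∧
  (∀ t, 1 ≤ t → l.f t + l.fbar t + l.f (t+1) = k - 1 →
    t * l.f t + t * l.fbar t + (t+1) * l.f (t+1) ≡ l.V t + i - 1 [MOD 2])

/-- the smallest part (in the order `1̄ < 1 < 2̄ < 2 < ⋯`) exists and is non-overlined -/
def SmallestNonOverlined (l : Overpartition) : Prop :=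
  ∃ s, 0 < l.f s ∧ l.fbar s = 0 ∧ ∀ t < s, l.f t = 0 ∧ l.fbar t = 0

/-- the smallest part (in the order `1̄ < 1 < 2̄ < 2 < ⋯`) exists and is overlined -/
def SmallestOverlined (l : Overpartition) : Prop :=
  ∃ s, 0 < l.fbar s ∧ ∀ t < s, l.f t = 0 ∧ l.fbar t = 0

def NoOverlined (l : Overpartition) : Prop := ∀ t, l.fbar t = 0

def NoOdd (l : Overpartition) : Prop := ∀ t, t % 2 = 1 → l.f t = 0 ∧ l.fbar t = 0

/-- the list of the parts of sizes `1,…,B` in increasing order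
(`1̄ < 1 < 2̄ < 2 < ⋯`); an overlined part is `(t, true)`. -/
def partsListUpTo (l : Overpartition) (B : ℕ) : List OPart :=
  (List.range B).flatMap (fun t =>
    (if l.fbar (t+1) = 1 then [((t+1 : ℕ), true)] else []) ++
    List.replicate (l.f (t+1)) ((t+1 : ℕ), false))

def obound (l : Overpartition) : ℕ := (l.f.support ∪ l.fbar.support).sup id + 1

/-- the list of all parts of `l` in increasing order -/
def partsList (l : Overpartition) : List OPart := partsListUpTo l (obound l)

/-- the multiset of parts of `l` -/
def partsMS (l : Overpartition) : Multiset OPart := (partsList l : Multiset OPart)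

/-- the least positive integer not belonging to `S` -/
def mex1 (S : Finset ℕ) : ℕ :=
  ((List.range (S.sup id + 2)).filter (fun r => decide (1 ≤ r ∧ r ∉ S))).headI

/-- the set of marks used by the already-marked parts satisfying `test` -/
def marksWhere (acc : List (OPart × ℕ)) (test : OPart → Bool) : Finset ℕ :=
  ((acc.filter (fun q => test q.1)).map (fun q => q.2)).toFinset

/-- process the parts in increasing order, assigning to each one the mark
computed by `markOf` from the previously marked parts -/
def markFold (markOf : List (OPart × ℕ) → OPart → ℕ) :
    List OPart → List (OPart × ℕ) → List (OPart × ℕ)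
  | [], acc => acc
  | p :: rest, acc => markFold markOf rest (acc ++ [(p, markOf acc p)])

/-- The Gordon marking rule: each part gets the smallest possible mark subject to:
(i) if `\overline{t+1}` is not a part, then all parts `t`, `t̄`, `t+1` get distinct
marks; (ii) if `\overline{t+1}` is a part, then the smallest mark assigned to a part
`t` or `t̄` may be reused for `t+1` or `\overline{t+1}`. -/
def gordonMarkOf (l : Overpartition) (acc : List (OPart × ℕ)) (p : OPart) : ℕ :=
  let same := marksWhere acc (fun q => decide (q.1 = p.1))
  let prev := marksWhere acc (fun q => decide (q.1 + 1 = p.1))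
  if l.fbar p.1 = 1 then
    mex1 (same ∪ (if h : prev.Nonempty then prev.erase (prev.min' h) else prev))
  else mex1 (same ∪ prev)

/-- the Gordon marking of `l`: the list of parts in increasing order with their marks -/
def gordonMarked (l : Overpartition) : List (OPart × ℕ) :=
  markFold (gordonMarkOf l) (partsList l) []

/-- `N_r`: the number of `r`-marked parts in the Gordon marking -/
def gordonN (l : Overpartition) (r : ℕ) : ℕ :=
  ((gordonMarked l).filter (fun q => decide (q.2 = r))).length

/-- The Göllnitz–Gordon marking rule (Definition 5.1): non-overlined odd and
overlined even parts get mark 1; an overlined odd part `\overline{2j+1}` gets the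
smallest mark different from those of `2j`, `\overline{2j}`; a non-overlined even part
`2j+2` gets the smallest mark different from earlier equal parts and, in case (b),
from the marks of `2j`, `\overline{2j}`, `\overline{2j+1}`; in case (c) it may not get
mark 1 and may reuse the smallest mark assigned to `2j` or `\overline{2j+1}`. -/
def ggMarkOf (l : Overpartition) (acc : List (OPart × ℕ)) (p : OPart) : ℕ :=
  if p.1 % 2 = 1 ∧ p.2 = false then 1
  else if p.1 % 2 = 0 ∧ p.2 = true then 1
  else if p.1 % 2 = 1 then
    mex1 (marksWhere acc (fun q => decide (q.1 = p.1 - 1)))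
  else
    let same := marksWhere acc (fun q => decide (q.1 = p.1))
    let lower := marksWhere acc
      (fun q => decide (q.1 = p.1 - 2 ∨ (q.1 = p.1 - 1 ∧ q.2 = true)))
    if 1 ∈ lower ∨ (l.f (p.1 - 1) = 0 ∧ l.fbar p.1 = 0) then
      mex1 (same ∪ lower)
    else
      mex1 (insert 1 same ∪ (if h : lower.Nonempty then lower.erase (lower.min' h) else lower))

/-- the Göllnitz–Gordon marking of `l` -/
def ggMarked (l : Overpartition) : List (OPart × ℕ) :=
  markFold (ggMarkOf l) (partsList l) []

/-- `N_r`: the number of `r`-marked parts in the Göllnitz–Gordon marking -/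
def ggN (l : Overpartition) (r : ℕ) : ℕ :=
  ((ggMarked l).filter (fun q => decide (q.2 = r))).length
/-- the 1-marked parts `λ^{(1)}_1 ≥ λ^{(1)}_2 ≥ ⋯` of the Göllnitz–Gordon marking,
in decreasing order (so index `j-1` holds `λ^{(1)}_j`) -/
def oneMarkedDesc (l : Overpartition) : List OPart :=
  (((ggMarked l).filter (fun q => decide (q.2 = 1))).map (fun q => q.1)).reverse

/-- the multiset of marked parts of a cluster: its `b`-th entry (0-indexed) is `(b+1)`-marked -/
def clusterMS (c : List OPart) : Multiset (OPart × ℕ) :=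
  ((c.zipIdx.map (fun q => (q.1, q.2 + 1))) : List (OPart × ℕ))

/-- there is a part of size `s` with mark `m` in the marked list `L` -/
def ExistsMarkedAt (L : List (OPart × ℕ)) (s m : ℕ) : Prop :=
  ∃ q ∈ L, q.1.1 = s ∧ q.2 = m

/-- conditions (i)–(iii) for the entry `y` (of mark `b+2`) following the entry `x`
(of mark `b+1`, i.e. 0-indexed position `b`) in a cluster -/
def chainStep (L : List (OPart × ℕ)) (b : ℕ) (x y : OPart) : Prop :=
  (x.1 % 2 = 1 → y.1 = x.1 + 1) ∧
  (x.1 % 2 = 0 →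
    (¬ ExistsMarkedAt L (x.1 + 2) (b + 1) → x.1 ≤ y.1 ∧ y.1 ≤ x.1 + 2) ∧
    (ExistsMarkedAt L (x.1 + 2) (b + 1) → x.1 ≤ y.1 ∧ y.1 ≤ x.1 + 1))

/-- cases (a), (b): the `j`-cluster is forced to be the singleton `λ^{(1)}_j` -/
def ForcedSingleton (one : List OPart) (j : ℕ) : Prop :=
  2 ≤ j ∧ ∃ cur prev, one[j-1]? = some cur ∧ one[j-2]? = some prev ∧
    (cur.1 = prev.1 ∨ (cur.1 % 2 = 1 ∧ prev.1 = cur.1 + 1))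

/-- `α` is the decomposition of the Göllnitz–Gordon marking of `l` into clusters
`α^{(N₁)}, …, α^{(1)}`: the `j`-cluster starts with the `j`-th largest 1-marked part,
the clusters partition the marked parts, forced singletons are singletons, consecutive
entries of a cluster obey conditions (i)–(iii), and each non-singleton-forced cluster
is a maximal such chain. -/
def IsClusterDecomp (l : Overpartition) (α : ℕ → List OPart) : Prop :=
  (∀ j, j = 0 ∨ ggN l 1 < j → α j = []) ∧
  (∀ j, 1 ≤ j → j ≤ ggN l 1 → (α j).head? = (oneMarkedDesc l)[j-1]?) ∧
  ((ggMarked l : Multiset (OPart × ℕ)) = ∑ j ∈ Finset.Icc 1 (ggN l 1), clusterMS (α j)) ∧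
  (∀ j, ForcedSingleton (oneMarkedDesc l) j → (α j).length = 1) ∧
  (∀ j b x y, (α j)[b]? = some x → (α j)[b+1]? = some y → chainStep (ggMarked l) b x y) ∧
  (∀ j, 1 ≤ j → j ≤ ggN l 1 → ¬ ForcedSingleton (oneMarkedDesc l) j →
    ∀ last, (α j).getLast? = some last →
      ¬ ∃ p : OPart,
        ((p, (α j).length + 1) ∈
          ((ggMarked l : Multiset (OPart × ℕ)) - ∑ j' ∈ Finset.Icc j (ggN l 1), clusterMS (α j'))) ∧
        chainStep (ggMarked l) ((α j).length - 1) last p)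

/-- the set `β(j)` (of 0-indexed positions): positions `c` such that
`|β_c^{(j)}| − |β_c^{(j+1)}| ≤ 2`, with strict inequality if either part is odd -/
def BetaIdx (α : ℕ → List OPart) (j : ℕ) : Set ℕ :=
  {c | ∃ x y, (α j)[c]? = some x ∧ (α (j+1))[c]? = some y ∧
     (x.1 : ℤ) - (y.1 : ℤ) ≤ 2 ∧ ((x.1 % 2 = 1 ∨ y.1 % 2 = 1) → (x.1 : ℤ) - (y.1 : ℤ) < 2)}

/-- `ν'` is obtained from `ν` by the second dilation of `p`-th kind: the odd part
`old` of the cluster `β^{(p)}` is replaced by the even part of size `|old|+1` with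
opposite overline status; when `p > 1` (in which case `β^{(p-1)}` must have no odd
part), additionally one part `chosen` of `β^{(p-1)}` — the entry indexed by the set
`β(p-1)` if it is nonempty, and otherwise the part of `β^{(p-1)}` of smallest size
and largest mark — is replaced by the part of size `|chosen|+1` with opposite
overline status. -/
def SecondDilationRel (ν ν' : Overpartition) (p : ℕ) : Prop :=
  ∃ α : ℕ → List OPart, IsClusterDecomp ν α ∧ 1 ≤ p ∧ p ≤ ggN ν 1 ∧
    ∃ old ∈ α p, old.1 % 2 = 1 ∧
      ((p = 1 ∧ partsMS ν' = (partsMS ν).erase old + {(old.1 + 1, !old.2)}) ∨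
       (1 < p ∧ (∀ q ∈ α (p-1), q.1 % 2 = 0) ∧
        ∃ c chosen, (α (p-1))[c]? = some chosen ∧
          ((BetaIdx α (p-1) = ∅ ∧ (∀ q ∈ α (p-1), chosen.1 ≤ q.1) ∧
             (∀ c' q, c < c' → (α (p-1))[c']? = some q → chosen.1 < q.1)) ∨
           c ∈ BetaIdx α (p-1)) ∧
          partsMS ν' = ((partsMS ν).erase old).erase chosen
            + {(old.1 + 1, !old.2), (chosen.1 + 1, !chosen.2)}))

/-- the second reduction of `p`-th kind: the inverse of the second dilation of `p`-th kind -/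
def SecondReductionRel (ν ν' : Overpartition) (p : ℕ) : Prop := SecondDilationRel ν' ν p

/-- the set of overpartitions satisfying the conditions of `Ẽ_{k,i}` whose Gordon
marking has exactly `N r` `r`-marked parts for `1 ≤ r ≤ k-1` -/
def ESetN (k i : ℕ) (N : ℕ → ℕ) : Set Overpartition :=
  {l | ECond k i l ∧ (∀ r, 1 ≤ r → r ≤ k-1 → gordonN l r = N r) ∧
    l.parts = ∑ j ∈ Finset.Icc 1 (k-1), N j}

def GSetN (k i : ℕ) (N : ℕ → ℕ) : Set Overpartition :=
  {l ∈ ESetN k i N | SmallestNonOverlined l}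

def HSetN (k i : ℕ) (N : ℕ → ℕ) : Set Overpartition :=
  {l ∈ ESetN k i N | SmallestOverlined l}

def BSetN (k i : ℕ) (N : ℕ → ℕ) : Set Overpartition :=
  {l ∈ GSetN k i N | NoOverlined l}

/-- the set of overpartitions satisfying the conditions of `Õ_{k,i}` whose
Göllnitz–Gordon marking has exactly `N r` `r`-marked parts for `1 ≤ r ≤ k-1` -/
def OSetN (k i : ℕ) (N : ℕ → ℕ) : Set Overpartition :=
  {l | OCond k i l ∧ (∀ r, 1 ≤ r → r ≤ k-1 → ggN l r = N r) ∧
    l.parts = ∑ j ∈ Finset.Icc 1 (k-1), N j}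

def WSetN (k i : ℕ) (N : ℕ → ℕ) : Set Overpartition :=
  {l ∈ OSetN k i N | NoOdd l}

/-- `(a;q)_n = ∏_{j=0}^{n-1} (1 - a q^j)` -/
noncomputable def qPoch (a q : ℂ) (n : ℕ) : ℂ := ∏ j ∈ Finset.range n, (1 - a * q ^ j)

/-- `(a;q)_∞ = ∏_{j=0}^{∞} (1 - a q^j)` -/
noncomputable def qPochInf (a q : ℂ) : ℂ := ∏' j : ℕ, (1 - a * q ^ j)

/-- `(a;q)_{n-1} = (a;q)_n / (1 - a q^{n-1})`, the standard meaning of a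
`q`-Pochhammer symbol with subscript `n - 1` (also for `n = 0`). -/
noncomputable def qPochSub1 (a q : ℂ) (n : ℕ) : ℂ := qPoch a q n / (1 - a * q ^ ((n : ℤ) - 1))

/-- sequences `N` with `N 1 ≥ N 2 ≥ ⋯ ≥ N (k-1) ≥ 0` (and `N j = 0` otherwise),
encoding the summation indices `N₁ ≥ ⋯ ≥ N_{k-1} ≥ 0` -/
def DecSeq (k : ℕ) : Set (ℕ → ℕ) :=
  {N | N 0 = 0 ∧ (∀ j, 1 ≤ j → N (j+1) ≤ N j) ∧ (∀ j, k ≤ j → N j = 0)}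

def doubleEmb : ℕ ↪ ℕ := ⟨fun t => 2 * t, mul_right_injective₀ two_ne_zero⟩

/-- doubling every part of an overpartition -/
noncomputable def double (l : Overpartition) : Overpartition where
  f := Finsupp.embDomain doubleEmb l.f
  fbar := Finsupp.embDomain doubleEmb l.fbar
  fbar_le_one := by
    intro t
    by_cases h : ∃ s, 2 * s = t
    · obtain ⟨s, rfl⟩ := h
      exact (Finsupp.embDomain_apply_self doubleEmb l.fbar s).trans_le (l.fbar_le_one s)
    · rw [Finsupp.embDomain_notin_range]
      · exact Nat.zero_le _
      · rintro ⟨s, rfl⟩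
        exact h ⟨s, rfl⟩
  f_zero := (Finsupp.embDomain_apply_self doubleEmb l.f 0).trans l.f_zero
  fbar_zero := (Finsupp.embDomain_apply_self doubleEmb l.fbar 0).trans l.fbar_zero
section Aux

open Finsupp

lemma Overpartition.ext' {l l' : Overpartition} (h1 : l.f = l'.f) (h2 : l.fbar = l'.fbar) :
    l = l' := by cases l; cases l'; simp_all

noncomputable def overAt (l : Overpartition) (s : ℕ) (hb : l.fbar s = 0) (hf : 0 < l.f s) :
    Overpartition where
  f := l.f - Finsupp.single s 1
  fbar := l.fbar + Finsupp.single s 1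
  fbar_le_one := by
    intro t
    rcases eq_or_ne t s with rfl | h
    · simp [hb]
    · simp [Finsupp.single_apply, (Ne.symm h), l.fbar_le_one t]
  f_zero := by simp [Finsupp.tsub_apply, l.f_zero]
  fbar_zero := by
    have hs : s ≠ 0 := by rintro rfl; simp [l.f_zero] at hf
    simp [Finsupp.single_apply, hs, l.fbar_zero]

end Aux

section Aux2
variable (l : Overpartition) (s : ℕ)

lemma overAt_f (hb : l.fbar s = 0) (hf : 0 < l.f s) (t : ℕ) :
    (overAt l s hb hf).f t = if t = s then l.f s - 1 else l.f t := by
  simp only [overAt, Finsupp.tsub_apply, Finsupp.single_apply]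
  rcases eq_or_ne t s with rfl | h
  · simp
  · simp [Ne.symm h, h]

lemma overAt_fbar (hb : l.fbar s = 0) (hf : 0 < l.f s) (t : ℕ) :
    (overAt l s hb hf).fbar t = if t = s then 1 else l.fbar t := by
  simp only [overAt, Finsupp.add_apply, Finsupp.single_apply]
  rcases eq_or_ne t s with rfl | h
  · simp [hb]
  · simp [Ne.symm h, h]

lemma overAt_f_add (hb : l.fbar s = 0) (hf : 0 < l.f s) :
    (overAt l s hb hf).f + Finsupp.single s 1 = l.f := by
  refine tsub_add_cancel_of_le ?_
  rw [Finsupp.single_le_iff]; exact hf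

lemma overAt_parts (hb : l.fbar s = 0) (hf : 0 < l.f s) :
    (overAt l s hb hf).parts = l.parts := by
  have h1 : l.f.sum (fun _ m => m) = (overAt l s hb hf).f.sum (fun _ m => m) + 1 := by
    conv_lhs => rw [← overAt_f_add l s hb hf]
    rw [Finsupp.sum_add_index' (fun _ => rfl) (fun _ _ _ => rfl)]
    simp
  have h2 : (overAt l s hb hf).fbar.sum (fun _ m => m) = l.fbar.sum (fun _ m => m) + 1 := by
    show (l.fbar + Finsupp.single s 1).sum _ = _
    rw [Finsupp.sum_add_index' (fun _ => rfl) (fun _ _ _ => rfl)]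
    simp
  unfold Overpartition.parts
  omega

lemma overAt_wt (hb : l.fbar s = 0) (hf : 0 < l.f s) :
    (overAt l s hb hf).wt = l.wt := by
  have h1 : l.f.sum (fun t m => t * m) = (overAt l s hb hf).f.sum (fun t m => t * m) + s := by
    conv_lhs => rw [← overAt_f_add l s hb hf]
    rw [Finsupp.sum_add_index' (fun a => mul_zero a) (fun a b c => mul_add a b c)]
    simp
  have h2 : (overAt l s hb hf).fbar.sum (fun t m => t * m)
      = l.fbar.sum (fun t m => t * m) + s := by
    show (l.fbar + Finsupp.single s 1).sum _ = _
    rw [Finsupp.sum_add_index' (fun a => mul_zero a) (fun a b c => mul_add a b c)]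
    simp
  unfold Overpartition.wt
  omega

lemma overAt_V (hb : l.fbar s = 0) (hf : 0 < l.f s) (hs : 1 ≤ s) (t : ℕ) :
    (overAt l s hb hf).V t = l.V t + if s ≤ t then 1 else 0 := by
  unfold Overpartition.V
  simp_rw [overAt_fbar l s hb hf]
  have : ∀ x ∈ Finset.Icc 1 t, (if x = s then 1 else l.fbar x)
      = l.fbar x + if x = s then 1 else 0 := by
    intro x _
    rcases eq_or_ne x s with rfl | h
    · simp [hb]
    · simp [h]
  rw [Finset.sum_congr rfl this, Finset.sum_add_distrib, Finset.sum_ite_eq' (Finset.Icc 1 t) s]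
  simp [Finset.mem_Icc, hs]

end Aux2

lemma V_eq_zero_of_min (l : Overpartition) (s : ℕ) (hb : l.fbar s = 0)
    (hmin : ∀ t < s, l.f t = 0 ∧ l.fbar t = 0) (t : ℕ) (ht : t ≤ s) : l.V t = 0 := by
  unfold Overpartition.V
  apply Finset.sum_eq_zero
  intro r hr
  rcases eq_or_ne r s with rfl | h
  · exact hb
  · exact (hmin r (lt_of_le_of_ne (le_trans (Finset.mem_Icc.mp hr).2 ht) h)).2

lemma econd_iff (k i : ℕ) (hik : i < k) (hi : 2 ≤ i) (l : Overpartition) (s : ℕ)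
    (hf : 0 < l.f s) (hb : l.fbar s = 0) (hmin : ∀ t < s, l.f t = 0 ∧ l.fbar t = 0) :
    ECond k i l ↔ ECond k (i-1) (overAt l s hb hf) := by
  have hs : 1 ≤ s := by
    rcases Nat.eq_zero_or_pos s with rfl | h
    · rw [l.f_zero] at hf; omega
    · exact h
  have hk : 3 ≤ k := by omega
  obtain ⟨c, hc⟩ : ∃ c, l.f s = c + 1 := ⟨l.f s - 1, by omega⟩
  have eL : s * (l.f s - 1) + s * 1 + (s+1) * l.f (s+1)
      = s * l.f s + s * l.fbar s + (s+1) * l.f (s+1) := by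
    rw [hb, hc]; simp only [Nat.add_sub_cancel, mul_zero, add_zero, mul_one]; ring
  constructor
  · rintro ⟨h1, h2, h3⟩
    refine ⟨?_, ?_, ?_⟩
    · rw [overAt_f]
      rcases eq_or_ne (1:ℕ) s with rfl | hne
      · rw [if_pos rfl]; omega
      · rw [if_neg hne]
        have h1s : 1 < s := lt_of_le_of_ne hs hne
        have := (hmin 1 h1s).1
        omega
    · intro t ht
      rw [overAt_f, overAt_f, overAt_fbar]
      rcases eq_or_ne t s with rfl | hts
      · rw [if_pos rfl, if_pos rfl, if_neg (by omega : ¬ t + 1 = t)]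
        have := h2 t ht
        omega
      · rcases eq_or_ne (t+1) s with hts1 | hts1
        · rw [if_neg hts, if_pos hts1, if_neg hts]
          have hm := hmin t (by omega)
          have := h2 s hs
          omega
        · rw [if_neg hts, if_neg hts1, if_neg hts]
          exact h2 t ht
    · intro t ht heq
      rw [overAt_f, overAt_f, overAt_fbar] at heq
      rw [overAt_f, overAt_f, overAt_fbar, overAt_V l s hb hf hs]
      rcases eq_or_ne t s with rfl | hts
      · rw [if_pos rfl, if_pos rfl, if_neg (by omega : ¬ t + 1 = t)] at heq
        rw [if_pos rfl, if_pos rfl, if_neg (by omega : ¬ t + 1 = t), if_pos le_rfl]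
        have heq0 : l.f t + l.fbar t + l.f (t+1) = k - 1 := by omega
        have H := h3 t ht heq0
        have eR : l.V t + 1 + (i-1) - 1 = l.V t + i - 1 := by omega
        rw [eL, eR]
        exact H
      · rcases eq_or_ne (t+1) s with hts1 | hts1
        · exfalso
          rw [if_neg hts, if_pos hts1, if_neg hts] at heq
          have hm := hmin t (by omega)
          have := h2 s hs
          omega
        · rw [if_neg hts, if_neg hts1, if_neg hts] at heq
          rw [if_neg hts, if_neg hts1, if_neg hts]
          rcases lt_or_ge t s with hlt | hge
          · exfalso
            have hm1 := hmin t hlt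
            have hm2 := hmin (t+1) (by omega)
            omega
          · have hst : s ≤ t := hge
            have H := h3 t ht heq
            have eR : l.V t + 1 + (i-1) - 1 = l.V t + i - 1 := by omega
            rw [if_pos hst, eR]
            exact H
  · rintro ⟨h1, h2, h3⟩
    rw [overAt_f] at h1
    refine ⟨?_, ?_, ?_⟩
    · rcases eq_or_ne (1:ℕ) s with rfl | hne
      · rw [if_pos rfl] at h1; omega
      · have h1s : 1 < s := lt_of_le_of_ne hs hne
        have := (hmin 1 h1s).1
        omega
    · intro t ht
      rcases eq_or_ne t s with rfl | hts
      · have H := h2 t ht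
        rw [overAt_f, overAt_f, overAt_fbar, if_pos rfl, if_pos rfl,
          if_neg (by omega : ¬ t + 1 = t)] at H
        omega
      · rcases eq_or_ne (t+1) s with hts1 | hts1
        · have H := h2 s hs
          rw [overAt_f, overAt_f, overAt_fbar, if_pos rfl, if_pos rfl,
            if_neg (by omega : ¬ s + 1 = s)] at H
          have hm := hmin t (by omega)
          rw [hts1, hm.1, hm.2]
          omega
        · have H := h2 t ht
          rw [overAt_f, overAt_f, overAt_fbar, if_neg hts, if_neg hts1, if_neg hts] at H
          exact H
    · intro t ht heq
      rcases eq_or_ne t s with rfl | hts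
      · have Heq' : (overAt l t hb hf).f t + (overAt l t hb hf).fbar t
            + (overAt l t hb hf).f (t+1) = k - 1 := by
          rw [overAt_f, overAt_f, overAt_fbar, if_pos rfl, if_pos rfl,
            if_neg (by omega : ¬ t + 1 = t)]
          omega
        have H := h3 t ht Heq'
        rw [overAt_f, overAt_f, overAt_fbar, overAt_V l t hb hf hs, if_pos rfl, if_pos rfl,
          if_neg (by omega : ¬ t + 1 = t), if_pos le_rfl] at H
        have eR : l.V t + 1 + (i-1) - 1 = l.V t + i - 1 := by omega
        rw [eL, eR] at H
        exact H
      · rcases eq_or_ne (t+1) s with hts1 | hts1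
        · -- t + 1 = s
          have hm := hmin t (by omega)
          have hfs : l.f s = k - 1 := by
            rw [hm.1, hm.2, hts1] at heq; omega
          have H2 := h2 s hs
          rw [overAt_f, overAt_f, overAt_fbar, if_pos rfl, if_pos rfl,
            if_neg (by omega : ¬ s + 1 = s)] at H2
          have hfs1 : l.f (s+1) = 0 := by omega
          have Heq' : (overAt l s hb hf).f s + (overAt l s hb hf).fbar s
              + (overAt l s hb hf).f (s+1) = k - 1 := by
            rw [overAt_f, overAt_f, overAt_fbar, if_pos rfl, if_pos rfl,
              if_neg (by omega : ¬ s + 1 = s)]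
            omega
          have H := h3 s hs Heq'
          rw [overAt_f, overAt_f, overAt_fbar, overAt_V l s hb hf hs, if_pos rfl, if_pos rfl,
            if_neg (by omega : ¬ s + 1 = s), if_pos le_rfl] at H
          have hVs : l.V s = 0 := V_eq_zero_of_min l s hb hmin s le_rfl
          have hVt : l.V t = 0 := V_eq_zero_of_min l s hb hmin t (by omega)
          have e1 : s * (l.f s - 1) + s * 1 + (s+1) * l.f (s+1) = s * l.f s := by
            rw [hfs1, hc]; simp only [Nat.add_sub_cancel, mul_zero, add_zero, mul_one]; ring
          have e2 : l.V s + 1 + (i-1) - 1 = i - 1 := by omega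
          rw [e1, e2] at H
          rw [hm.1, hm.2, hts1, hVt]
          simpa using H
        · rcases lt_or_ge t s with hlt | hge
          · exfalso
            have hm1 := hmin t hlt
            have hm2 := hmin (t+1) (by omega)
            omega
          · have Heq' : (overAt l s hb hf).f t + (overAt l s hb hf).fbar t
                + (overAt l s hb hf).f (t+1) = k - 1 := by
              rw [overAt_f, overAt_f, overAt_fbar, if_neg hts, if_neg hts1, if_neg hts]
              exact heq
            have H := h3 t ht Heq'
            rw [overAt_f, overAt_f, overAt_fbar, overAt_V l s hb hf hs, if_neg hts, if_neg hts1,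
              if_neg hts, if_pos hge] at H
            have eR : l.V t + 1 + (i-1) - 1 = l.V t + i - 1 := by omega
            rw [eR] at H
            exact H

noncomputable def unAt (l : Overpartition) (s : ℕ) (hs : s ≠ 0) : Overpartition where
  f := l.f + Finsupp.single s 1
  fbar := l.fbar - Finsupp.single s 1
  fbar_le_one := fun t =>
    le_trans (by rw [Finsupp.tsub_apply]; exact Nat.sub_le _ _) (l.fbar_le_one t)
  f_zero := by simp [Finsupp.single_apply, Ne.symm hs, l.f_zero, hs]
  fbar_zero := by simp [Finsupp.tsub_apply, l.fbar_zero]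

lemma unAt_f (l : Overpartition) (s : ℕ) (hs : s ≠ 0) (t : ℕ) :
    (unAt l s hs).f t = if t = s then l.f s + 1 else l.f t := by
  simp only [unAt, Finsupp.add_apply, Finsupp.single_apply]
  rcases eq_or_ne t s with rfl | h
  · simp
  · simp [Ne.symm h, h]

lemma unAt_fbar (l : Overpartition) (s : ℕ) (hs : s ≠ 0) (t : ℕ) :
    (unAt l s hs).fbar t = if t = s then l.fbar s - 1 else l.fbar t := by
  simp only [unAt, Finsupp.tsub_apply, Finsupp.single_apply]
  rcases eq_or_ne t s with rfl | h
  · simp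
  · simp [Ne.symm h, h]

lemma unAt_overAt (l : Overpartition) (s : ℕ) (hb : l.fbar s = 0) (hf : 0 < l.f s)
    (hs : s ≠ 0) : unAt (overAt l s hb hf) s hs = l := by
  apply Overpartition.ext'
  · show (l.f - Finsupp.single s 1) + Finsupp.single s 1 = l.f
    refine tsub_add_cancel_of_le ?_
    rw [Finsupp.single_le_iff]; exact hf
  · show (l.fbar + Finsupp.single s 1) - Finsupp.single s 1 = l.fbar
    exact add_tsub_cancel_right _ _

lemma overAt_unAt (l : Overpartition) (s : ℕ) (hs : s ≠ 0) (hb1 : 0 < l.fbar s)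
    (hb : (unAt l s hs).fbar s = 0) (hf : 0 < (unAt l s hs).f s) :
    overAt (unAt l s hs) s hb hf = l := by
  apply Overpartition.ext'
  · show (l.f + Finsupp.single s 1) - Finsupp.single s 1 = l.f
    exact add_tsub_cancel_right _ _
  · show (l.fbar - Finsupp.single s 1) + Finsupp.single s 1 = l.fbar
    refine tsub_add_cancel_of_le ?_
    rw [Finsupp.single_le_iff]; exact hb1

lemma smallest_unique (l : Overpartition) {s s' : ℕ}
    (h : 0 < l.f s + l.fbar s) (hm : ∀ t < s, l.f t = 0 ∧ l.fbar t = 0)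
    (h' : 0 < l.f s' + l.fbar s') (hm' : ∀ t < s', l.f t = 0 ∧ l.fbar t = 0) : s = s' := by
  rcases lt_trichotomy s s' with hlt | heq | hgt
  · have := hm' s hlt; omega
  · exact heq
  · have := hm s' hgt; omega

open Classical in
noncomputable def omap (l : Overpartition) : Overpartition :=
  if h : ∃ s, 0 < l.f s ∧ l.fbar s = 0 ∧ ∀ t < s, l.f t = 0 ∧ l.fbar t = 0
  then overAt l h.choose h.choose_spec.2.1 h.choose_spec.1
  else l

lemma overAt_congr (l : Overpartition) {s s' : ℕ} (e : s = s')
    (hb : l.fbar s = 0) (hf : 0 < l.f s) (hb' : l.fbar s' = 0) (hf' : 0 < l.f s') :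
    overAt l s hb hf = overAt l s' hb' hf' := by subst e; rfl

lemma omap_eq (l : Overpartition) {s : ℕ} (hf : 0 < l.f s) (hb : l.fbar s = 0)
    (hmin : ∀ t < s, l.f t = 0 ∧ l.fbar t = 0) :
    omap l = overAt l s hb hf := by
  have h : ∃ s, 0 < l.f s ∧ l.fbar s = 0 ∧ ∀ t < s, l.f t = 0 ∧ l.fbar t = 0 := ⟨s, hf, hb, hmin⟩
  rw [omap, dif_pos h]
  refine overAt_congr l ?_ _ _ _ _
  refine smallest_unique l ?_ ?_ ?_ ?_
  · have := h.choose_spec.1; omega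
  · exact h.choose_spec.2.2
  · omega
  · exact hmin

theorem G_eq_H_pred'
    (k i : ℕ) (hik : i < k) (hi : 2 ≤ i) (m n : ℕ) :
    {l : Overpartition | l.wt = n ∧ l.parts = m ∧ ECond k i l ∧ SmallestNonOverlined l}.ncard
      = {l : Overpartition |
          l.wt = n ∧ l.parts = m ∧ ECond k (i-1) l ∧ SmallestOverlined l}.ncard := by
  have himg : omap '' {l : Overpartition |
        l.wt = n ∧ l.parts = m ∧ ECond k i l ∧ SmallestNonOverlined l}
      = {l : Overpartition |
          l.wt = n ∧ l.parts = m ∧ ECond k (i-1) l ∧ SmallestOverlined l} := by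
    ext l'
    constructor
    · rintro ⟨l, ⟨hw, hp, he, hsm⟩, rfl⟩
      obtain ⟨s, hf, hb, hmin⟩ := hsm
      have e := omap_eq l hf hb hmin
      rw [Set.mem_setOf_eq, e]
      refine ⟨?_, ?_, ?_, ?_⟩
      · rw [overAt_wt]; exact hw
      · rw [overAt_parts]; exact hp
      · exact (econd_iff k i hik hi l s hf hb hmin).mp he
      · refine ⟨s, ?_, ?_⟩
        · rw [overAt_fbar, if_pos rfl]; omega
        · intro t htl
          constructor
          · rw [overAt_f, if_neg (by omega : ¬ t = s)]; exact (hmin t htl).1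
          · rw [overAt_fbar, if_neg (by omega : ¬ t = s)]; exact (hmin t htl).2
    · rintro ⟨hw, hp, he, hsm⟩
      obtain ⟨s, hfb, hmin⟩ := hsm
      have hs0 : s ≠ 0 := by rintro rfl; rw [l'.fbar_zero] at hfb; omega
      have haf : 0 < (unAt l' s hs0).f s := by rw [unAt_f, if_pos rfl]; omega
      have hab : (unAt l' s hs0).fbar s = 0 := by
        have := l'.fbar_le_one s
        rw [unAt_fbar, if_pos rfl]; omega
      have hamin : ∀ t < s, (unAt l' s hs0).f t = 0 ∧ (unAt l' s hs0).fbar t = 0 := by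
        intro t htl
        have h' := hmin t htl
        constructor
        · rw [unAt_f, if_neg (by omega : ¬ t = s)]; exact h'.1
        · rw [unAt_fbar, if_neg (by omega : ¬ t = s)]; exact h'.2
      have eo : overAt (unAt l' s hs0) s hab haf = l' := overAt_unAt l' s hs0 hfb hab haf
      refine ⟨unAt l' s hs0, ⟨?_, ?_, ?_, ⟨s, haf, hab, hamin⟩⟩, ?_⟩
      · have := overAt_wt (unAt l' s hs0) s hab haf; rw [eo] at this; omega
      · have := overAt_parts (unAt l' s hs0) s hab haf; rw [eo] at this; omega
      · refine (econd_iff k i hik hi (unAt l' s hs0) s haf hab hamin).mpr ?_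
        rw [eo]; exact he
      · rw [omap_eq (unAt l' s hs0) haf hab hamin, eo]
  have hinj : Set.InjOn omap {l : Overpartition |
      l.wt = n ∧ l.parts = m ∧ ECond k i l ∧ SmallestNonOverlined l} := by
    rintro a ⟨_, _, _, hsa⟩ b ⟨_, _, _, hsb⟩ heq
    obtain ⟨sa, hfa, hba, hma⟩ := hsa
    obtain ⟨sb, hfb, hbb, hmb⟩ := hsb
    have hsa0 : sa ≠ 0 := by rintro rfl; rw [a.f_zero] at hfa; omega
    have hsb0 : sb ≠ 0 := by rintro rfl; rw [b.f_zero] at hfb; omega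
    have ea := omap_eq a hfa hba hma
    have eb := omap_eq b hfb hbb hmb
    have hsab : sa = sb := by
      refine smallest_unique (omap a) ?_ ?_ ?_ ?_
      · rw [ea, overAt_f a sa hba hfa sa, overAt_fbar a sa hba hfa sa, if_pos rfl, if_pos rfl]
        omega
      · intro t htl
        rw [ea]
        have h' := hma t htl
        constructor
        · rw [overAt_f, if_neg (by omega : ¬ t = sa)]; exact h'.1
        · rw [overAt_fbar, if_neg (by omega : ¬ t = sa)]; exact h'.2
      · rw [heq, eb, overAt_f b sb hbb hfb sb, overAt_fbar b sb hbb hfb sb, if_pos rfl,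
          if_pos rfl]
        omega
      · intro t htl
        rw [heq, eb]
        have h' := hmb t htl
        constructor
        · rw [overAt_f, if_neg (by omega : ¬ t = sb)]; exact h'.1
        · rw [overAt_fbar, if_neg (by omega : ¬ t = sb)]; exact h'.2
    subst hsab
    have ia : unAt (omap a) sa hsa0 = a := by
      rw [ea]; exact unAt_overAt a sa hba hfa hsa0
    have ib : unAt (omap b) sa hsa0 = b := by
      rw [eb]; exact unAt_overAt b sa hbb hfb hsa0
    rw [← ia, ← ib, heq]
  rw [← himg, Set.ncard_image_of_injOn hinj]


/-- `G̃_{k,i}(m,n) = H̃_{k,i-1}(m,n)` for `k > i ≥ 2` (Theorem 3.1, (3.2)). -/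
theorem G_eq_H_pred
    (k i : ℕ) (hik : i < k) (hi : 2 ≤ i) (m n : ℕ) :
    {l : Overpartition | l.wt = n ∧ l.parts = m ∧ ECond k i l ∧ SmallestNonOverlined l}.ncard
      = {l : Overpartition |
          l.wt = n ∧ l.parts = m ∧ ECond k (i-1) l ∧ SmallestOverlined l}.ncard := by
  exact G_eq_H_pred' k i hik hi m n
end

section
/- For every integer k ≥ 2 and all m, n ≥ 0, the number G̃_{k,1}(m,n) of overpartitions counted by Ẽ_{k,1}(m,n) whose smallest part is non-overlined equals the number H̃_{k,k−1}(m, n−m) of overpartitions counted by Ẽ_{k,k−1}(m, n−m) whose smallest part is overlined. -/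
open scoped BigOperators

namespace RRGAux

open Overpartition

def succEmb : ℕ ↪ ℕ := ⟨Nat.succ, Nat.succ_injective⟩

lemma embS_apply (v : ℕ →₀ ℕ) (a : ℕ) :
    Finsupp.embDomain succEmb v (a + 1) = v a :=
  Finsupp.embDomain_apply_self succEmb v a

lemma embS_zero (v : ℕ →₀ ℕ) : Finsupp.embDomain succEmb v 0 = 0 :=
  Finsupp.embDomain_notin_range _ _ 0 (by rintro ⟨a, ha⟩; exact Nat.succ_ne_zero a ha)

noncomputable def sLow (l : Overpartition) : ℕ := sInf {t | l.f t ≠ 0 ∨ l.fbar t ≠ 0}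

lemma sLow_eq (l : Overpartition) (s : ℕ) (hmem : l.f s ≠ 0 ∨ l.fbar s ≠ 0)
    (hlow : ∀ t < s, l.f t = 0 ∧ l.fbar t = 0) : sLow l = s := by
  refine le_antisymm (Nat.sInf_le hmem) ?_
  by_contra hlt
  push_neg at hlt
  have hmem' := Nat.sInf_mem (⟨s, hmem⟩ : Set.Nonempty {t | l.f t ≠ 0 ∨ l.fbar t ≠ 0})
  have := hlow _ hlt
  rcases hmem' with h | h
  · exact h this.1
  · exact h this.2

noncomputable def Gmap (μ : Overpartition) : Overpartition where
  f := Finsupp.embDomain succEmb μ.f + Finsupp.single (sLow μ + 1) 1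
  fbar := Finsupp.embDomain succEmb (μ.fbar.erase (sLow μ))
  fbar_le_one := by
    intro t
    match t with
    | 0 => rw [embS_zero]; omega
    | a + 1 =>
      rw [embS_apply]
      rcases eq_or_ne a (sLow μ) with h | h
      · rw [h, Finsupp.erase_same]; omega
      · rw [Finsupp.erase_ne h]; exact μ.fbar_le_one a
  f_zero := by
    rw [Finsupp.add_apply, embS_zero, Finsupp.single_eq_of_ne (by omega)]
    rfl
  fbar_zero := embS_zero _

lemma Gmap_f_def (μ : Overpartition) :
    (Gmap μ).f = Finsupp.embDomain succEmb μ.f + Finsupp.single (sLow μ + 1) 1 := rfl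

lemma Gmap_fbar_def (μ : Overpartition) :
    (Gmap μ).fbar = Finsupp.embDomain succEmb (μ.fbar.erase (sLow μ)) := rfl

lemma Gmap_f_zero (μ : Overpartition) : (Gmap μ).f 0 = 0 := (Gmap μ).f_zero

lemma Gmap_fbar_zero (μ : Overpartition) : (Gmap μ).fbar 0 = 0 := (Gmap μ).fbar_zero

lemma Gmap_f_succ (μ : Overpartition) (a : ℕ) :
    (Gmap μ).f (a + 1) = μ.f a + (if a = sLow μ then 1 else 0) := by
  rw [Gmap_f_def, Finsupp.add_apply, embS_apply, Finsupp.single_apply]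
  congr 1
  rcases eq_or_ne a (sLow μ) with h | h
  · simp [h]
  · rw [if_neg (by omega), if_neg h]

lemma Gmap_fbar_succ (μ : Overpartition) (a : ℕ) :
    (Gmap μ).fbar (a + 1) = if a = sLow μ then 0 else μ.fbar a := by
  rw [Gmap_fbar_def, embS_apply]
  rcases eq_or_ne a (sLow μ) with h | h
  · rw [h, Finsupp.erase_same, if_pos rfl]
  · rw [Finsupp.erase_ne h, if_neg h]

structure GoodHyp (μ : Overpartition) : Prop where
  h1 : μ.fbar (sLow μ) = 1
  hlow : ∀ t < sLow μ, μ.f t = 0 ∧ μ.fbar t = 0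
  hs : 1 ≤ sLow μ

lemma good_of_smallestOverlined (μ : Overpartition) (h : SmallestOverlined μ) : GoodHyp μ := by
  obtain ⟨s, hpos, hlow⟩ := h
  have hsl : sLow μ = s := sLow_eq μ s (Or.inr (by omega)) hlow
  have hs1 : 1 ≤ s := by
    rcases Nat.eq_zero_or_pos s with h0 | h0
    · rw [h0] at hpos; rw [μ.fbar_zero] at hpos; omega
    · exact h0
  refine ⟨?_, ?_, ?_⟩
  · rw [hsl]; have := μ.fbar_le_one s; omega
  · rw [hsl]; exact hlow
  · omega

lemma sum_split (v : ℕ →₀ ℕ) :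
    (v.sum fun a b => (a + 1) * b) = (v.sum fun a b => a * b) + v.sum fun _ b => b := by
  rw [← Finsupp.sum_add]
  apply Finsupp.sum_congr
  intro a _
  ring

lemma fbar_split (μ : Overpartition) (h1 : μ.fbar (sLow μ) = 1) :
    Finsupp.single (sLow μ) 1 + μ.fbar.erase (sLow μ) = μ.fbar := by
  have := Finsupp.single_add_erase (sLow μ) μ.fbar
  rwa [h1] at this

lemma parts_Gmap (μ : Overpartition) (h1 : μ.fbar (sLow μ) = 1) :
    (Gmap μ).parts = μ.parts := by
  unfold Overpartition.parts
  rw [Gmap_f_def, Gmap_fbar_def,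
    Finsupp.sum_add_index' (fun _ => rfl) (fun _ _ _ => rfl),
    Finsupp.sum_embDomain, Finsupp.sum_single_index rfl, Finsupp.sum_embDomain]
  conv_rhs => rw [← fbar_split μ h1,
    Finsupp.sum_add_index' (fun _ => rfl) (fun _ _ _ => rfl),
    Finsupp.sum_single_index rfl]
  omega

lemma wt_Gmap (μ : Overpartition) (h1 : μ.fbar (sLow μ) = 1) :
    (Gmap μ).wt = μ.wt + μ.parts := by
  unfold Overpartition.wt Overpartition.parts
  rw [Gmap_f_def, Gmap_fbar_def,
    Finsupp.sum_add_index' (fun a => mul_zero a) (fun a b c => mul_add a b c),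
    Finsupp.sum_embDomain, Finsupp.sum_single_index (mul_zero _), Finsupp.sum_embDomain]
  conv_rhs => rw [← fbar_split μ h1,
    Finsupp.sum_add_index' (fun a => mul_zero a) (fun a b c => mul_add a b c),
    Finsupp.sum_single_index (mul_zero _),
    Finsupp.sum_add_index' (fun _ => rfl) (fun _ _ _ => rfl),
    Finsupp.sum_single_index rfl]
  have e1 : (μ.f.sum fun a b => succEmb a * b) = (μ.f.sum fun a b => a * b) + μ.f.sum fun _ b => b :=
    sum_split μ.f
  have e2 : ((μ.fbar.erase (sLow μ)).sum fun a b => succEmb a * b)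
      = ((μ.fbar.erase (sLow μ)).sum fun a b => a * b) + (μ.fbar.erase (sLow μ)).sum fun _ b => b :=
    sum_split (μ.fbar.erase (sLow μ))
  rw [e1, e2]
  ring

lemma V_succ (l : Overpartition) (t : ℕ) : l.V (t + 1) = l.V t + l.fbar (t + 1) :=
  Finset.sum_Icc_succ_top (by omega) _

lemma V_zero (l : Overpartition) : l.V 0 = 0 := by simp [Overpartition.V]

lemma V_Gmap (μ : Overpartition) (hG : GoodHyp μ) (t : ℕ) :
    μ.V t = (Gmap μ).V (t + 1) + (if sLow μ ≤ t then 1 else 0) := by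
  have hs := hG.hs
  induction t with
  | zero =>
    rw [V_zero, V_succ, V_zero, Gmap_fbar_succ, μ.fbar_zero]
    split_ifs <;> omega
  | succ t ih =>
    rw [V_succ, V_succ, Gmap_fbar_succ, ih]
    have h1 := hG.h1
    rcases eq_or_ne (t + 1) (sLow μ) with h | h
    · have h1' : μ.fbar (t + 1) = 1 := by rw [h]; exact hG.h1
      rw [if_pos h, if_neg (show ¬ sLow μ ≤ t by omega), if_pos (show sLow μ ≤ t + 1 by omega), h1']
    · rw [if_neg h]
      split_ifs <;> omega

lemma V_lt (μ : Overpartition) (hG : GoodHyp μ) (t : ℕ) (ht : t < sLow μ) : μ.V t = 0 := by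
  apply Finset.sum_eq_zero
  intro x hx
  rw [Finset.mem_Icc] at hx
  exact (hG.hlow x (by omega)).2

lemma V_at (μ : Overpartition) (hG : GoodHyp μ) : μ.V (sLow μ) = 1 := by
  obtain ⟨u, hu⟩ : ∃ u, sLow μ = u + 1 := ⟨sLow μ - 1, by have := hG.hs; omega⟩
  rw [hu, V_succ, ← hu, hG.h1, V_lt μ hG u (by omega)]

lemma to_zmod {a b : ℕ} (h : a ≡ b [MOD 2]) : (a : ZMod 2) = b :=
  (ZMod.natCast_eq_natCast_iff a b 2).mpr h

lemma of_zmod {a b : ℕ} (h : (a : ZMod 2) = b) : a ≡ b [MOD 2] :=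
  (ZMod.natCast_eq_natCast_iff a b 2).mp h

lemma ECond_fwd (μ : Overpartition) (hG : GoodHyp μ) (k : ℕ) (hk : 2 ≤ k)
    (hE : ECond k (k - 1) μ) : ECond k 1 (Gmap μ) := by
  obtain ⟨K, rfl⟩ : ∃ K, k = K + 2 := ⟨k - 2, by omega⟩
  obtain ⟨hE1, hE2, hE3⟩ := hE
  have hs := hG.hs
  have h1 := hG.h1
  have h2 : (2 : ZMod 2) = 0 := by decide
  refine ⟨?_, ?_, ?_⟩
  · have e := Gmap_f_succ μ 0
    rw [if_neg (show (0:ℕ) ≠ sLow μ by omega), μ.f_zero] at e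
    norm_num at e
    omega
  · intro t ht
    obtain ⟨a, rfl⟩ : ∃ a, t = a + 1 := ⟨t - 1, by omega⟩
    have ef1 := Gmap_f_succ μ a
    have eb1 := Gmap_fbar_succ μ a
    have ef2 := Gmap_f_succ μ (a + 1)
    rcases eq_or_ne a (sLow μ) with rfl | ha
    · rw [if_pos rfl] at ef1 eb1
      rw [if_neg (by omega)] at ef2
      have hh := hE2 (sLow μ) hs
      omega
    · rw [if_neg ha] at ef1 eb1
      rcases eq_or_ne (a + 1) (sLow μ) with hb | hb
      · rw [if_pos hb] at ef2
        have hz1 := (hG.hlow a (by omega)).1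
        have hz2 := (hG.hlow a (by omega)).2
        have hh := hE2 (sLow μ) hs
        have heq : μ.f (a + 1) = μ.f (sLow μ) := by rw [hb]
        omega
      · rw [if_neg hb] at ef2
        rcases Nat.eq_zero_or_pos a with rfl | hapos
        · have hz1 := (hG.hlow 1 (by omega)).1
          have hf0 := μ.f_zero
          have hb0 := μ.fbar_zero
          norm_num at ef1 eb1 ef2 ⊢
          omega
        · have hh := hE2 a hapos
          omega
  · intro t ht hsum
    obtain ⟨a, rfl⟩ : ∃ a, t = a + 1 := ⟨t - 1, by omega⟩
    have ef1 := Gmap_f_succ μ a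
    have eb1 := Gmap_fbar_succ μ a
    have ef2 := Gmap_f_succ μ (a + 1)
    rw [Nat.add_sub_cancel]
    rcases eq_or_ne a (sLow μ) with rfl | ha
    · -- a = sLow μ
      rw [if_pos rfl] at ef1 eb1
      rw [if_neg (by omega)] at ef2
      have hVat := V_at μ hG
      have hV := V_Gmap μ hG (sLow μ)
      rw [if_pos le_rfl] at hV
      have hV0 : (Gmap μ).V (sLow μ + 1) = 0 := by omega
      have hsum' : μ.f (sLow μ) + μ.fbar (sLow μ) + μ.f (sLow μ + 1) = K + 2 - 1 := by omega
      have hc := hE3 (sLow μ) hs hsum'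
      rw [hVat, h1, show 1 + (K + 2 - 1) - 1 = K + 1 by omega] at hc
      rw [ef1, eb1, ef2, hV0]
      refine of_zmod ?_
      have hcz := to_zmod hc
      have hsum'' : μ.f (sLow μ) + 1 + μ.f (sLow μ + 1) = K + 1 := by omega
      have hsz : ((μ.f (sLow μ) + 1 + μ.f (sLow μ + 1) : ℕ) : ZMod 2) = ((K + 1 : ℕ) : ZMod 2) := by
        rw [hsum'']
      push_cast at hcz hsz ⊢
      linear_combination hcz + hsz + ((K : ZMod 2) + 1) * h2
    · rcases eq_or_ne (a + 1) (sLow μ) with hb | hb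
      · -- a + 1 = sLow μ
        rw [if_neg ha] at ef1 eb1
        rw [if_pos hb] at ef2
        have hz1 := (hG.hlow a (by omega)).1
        have hz2 := (hG.hlow a (by omega)).2
        have hfa : μ.f (a + 1) = μ.f (sLow μ) := by rw [hb]
        have hfs : μ.f (sLow μ) = K := by omega
        have hb2 := hE2 (sLow μ) hs
        have hz3 : μ.f (sLow μ + 1) = 0 := by omega
        have hsum' : μ.f (sLow μ) + μ.fbar (sLow μ) + μ.f (sLow μ + 1) = K + 2 - 1 := by omega
        have hc := hE3 (sLow μ) hs hsum'
        have hVat := V_at μ hG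
        rw [hVat, h1, hfs, hz3, show 1 + (K + 2 - 1) - 1 = K + 1 by omega, ← hb] at hc
        have hV := V_Gmap μ hG a
        rw [if_neg (by omega)] at hV
        have hV1 : (Gmap μ).V (a + 1) = 0 := by
          have := V_lt μ hG a (by omega)
          omega
        rw [ef1, eb1, ef2, hV1, hz1, hz2, hfa, hfs]
        refine of_zmod ?_
        have hcz := to_zmod hc
        push_cast at hcz ⊢
        linear_combination hcz + ((K : ZMod 2) + 1) * h2
      · rcases Nat.lt_or_ge a (sLow μ) with hlt | hge
        · exfalso
          rw [if_neg ha] at ef1 eb1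
          rw [if_neg hb] at ef2
          have hz1 := hG.hlow a hlt
          have hz2 := hG.hlow (a + 1) (by omega)
          omega
        · -- a > sLow μ
          rw [if_neg ha] at ef1 eb1
          rw [if_neg hb] at ef2
          have hsum' : μ.f a + μ.fbar a + μ.f (a + 1) = K + 2 - 1 := by omega
          have hc := hE3 a (by omega) hsum'
          have hV := V_Gmap μ hG a
          rw [if_pos (by omega)] at hV
          rw [show μ.V a + (K + 2 - 1) - 1 = μ.V a + K by omega, hV] at hc
          rw [ef1, eb1, ef2]
          refine of_zmod ?_
          have hcz := to_zmod hc
          have hsum'' : μ.f a + μ.fbar a + μ.f (a + 1) = K + 1 := by omega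
          have hsz : ((μ.f a + μ.fbar a + μ.f (a + 1) : ℕ) : ZMod 2) = ((K + 1 : ℕ) : ZMod 2) := by
            rw [hsum'']
          push_cast at hcz hsz ⊢
          linear_combination hcz + hsz + ((K : ZMod 2) + 1) * h2

lemma ECond_bwd (μ : Overpartition) (hG : GoodHyp μ) (k : ℕ) (hk : 2 ≤ k)
    (hE : ECond k 1 (Gmap μ)) : ECond k (k - 1) μ := by
  obtain ⟨K, rfl⟩ : ∃ K, k = K + 2 := ⟨k - 2, by omega⟩
  obtain ⟨hE1, hE2, hE3⟩ := hE
  have hs := hG.hs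
  have h1 := hG.h1
  have h2 : (2 : ZMod 2) = 0 := by decide
  refine ⟨?_, ?_, ?_⟩
  · -- μ.f 1 ≤ K + 2 - 1 - 1
    rcases eq_or_ne (sLow μ) 1 with h | h
    · have e1 := Gmap_f_succ μ 0
      have e2 := Gmap_fbar_succ μ 0
      have e3 := Gmap_f_succ μ 1
      rw [if_neg (by omega)] at e1 e2
      rw [if_pos h.symm] at e3
      have hh := hE2 1 le_rfl
      have hf0 := μ.f_zero
      have hb0 := μ.fbar_zero
      norm_num at e1 e2 e3 hh
      omega
    · have := (hG.hlow 1 (by omega)).1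
      omega
  · intro a ha
    have ef1 := Gmap_f_succ μ a
    have eb1 := Gmap_fbar_succ μ a
    have ef2 := Gmap_f_succ μ (a + 1)
    rcases eq_or_ne a (sLow μ) with rfl | hne
    · rw [if_pos rfl] at ef1 eb1
      rw [if_neg (by omega)] at ef2
      have hh := hE2 (sLow μ + 1) (by omega)
      omega
    · rcases eq_or_ne (a + 1) (sLow μ) with hb | hb
      · have hz := hG.hlow a (by omega)
        have ef1' := Gmap_f_succ μ (sLow μ)
        have eb1' := Gmap_fbar_succ μ (sLow μ)
        have ef2' := Gmap_f_succ μ (sLow μ + 1)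
        rw [if_pos rfl] at ef1' eb1'
        rw [if_neg (by omega)] at ef2'
        have hh := hE2 (sLow μ + 1) (by omega)
        have heq : μ.f (a + 1) = μ.f (sLow μ) := by rw [hb]
        omega
      · rcases Nat.lt_or_ge a (sLow μ) with hlt | hge
        · have hz1 := hG.hlow a hlt
          have hz2 := hG.hlow (a + 1) (by omega)
          omega
        · rw [if_neg hne] at ef1 eb1
          rw [if_neg hb] at ef2
          have hh := hE2 (a + 1) (by omega)
          omega
  · intro a ha hsum
    have ef1 := Gmap_f_succ μ a
    have eb1 := Gmap_fbar_succ μ a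
    have ef2 := Gmap_f_succ μ (a + 1)
    rw [show μ.V a + (K + 2 - 1) - 1 = μ.V a + K by omega]
    rcases eq_or_ne a (sLow μ) with rfl | hne
    · rw [if_pos rfl] at ef1 eb1
      rw [if_neg (by omega)] at ef2
      have hVat := V_at μ hG
      have hV := V_Gmap μ hG (sLow μ)
      rw [if_pos le_rfl] at hV
      have hV0 : (Gmap μ).V (sLow μ + 1) = 0 := by omega
      have hsumL : (Gmap μ).f (sLow μ + 1) + (Gmap μ).fbar (sLow μ + 1)
          + (Gmap μ).f (sLow μ + 1 + 1) = K + 2 - 1 := by omega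
      have hc := hE3 (sLow μ + 1) (by omega) hsumL
      rw [Nat.add_sub_cancel, hV0, ef1, eb1, ef2] at hc
      have hsum' : μ.f (sLow μ) + 1 + μ.f (sLow μ + 1) = K + 1 := by omega
      rw [hVat, h1]
      refine of_zmod ?_
      have hcz := to_zmod hc
      have hsz : ((μ.f (sLow μ) + 1 + μ.f (sLow μ + 1) : ℕ) : ZMod 2) = ((K + 1 : ℕ) : ZMod 2) := by
        rw [hsum']
      push_cast at hcz hsz ⊢
      linear_combination hcz - hsz - ((K : ZMod 2) + 1) * h2
    · rcases eq_or_ne (a + 1) (sLow μ) with hb | hb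
      · exfalso
        have hz := hG.hlow a (by omega)
        have ef1' := Gmap_f_succ μ (sLow μ)
        have eb1' := Gmap_fbar_succ μ (sLow μ)
        have ef2' := Gmap_f_succ μ (sLow μ + 1)
        rw [if_pos rfl] at ef1' eb1'
        rw [if_neg (by omega)] at ef2'
        have hh := hE2 (sLow μ + 1) (by omega)
        have heq : μ.f (a + 1) = μ.f (sLow μ) := by rw [hb]
        omega
      · rcases Nat.lt_or_ge a (sLow μ) with hlt | hge
        · exfalso
          have hz1 := hG.hlow a hlt
          have hz2 := hG.hlow (a + 1) (by omega)
          omega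
        · rw [if_neg hne] at ef1 eb1
          rw [if_neg hb] at ef2
          have hsumL : (Gmap μ).f (a + 1) + (Gmap μ).fbar (a + 1)
              + (Gmap μ).f (a + 1 + 1) = K + 2 - 1 := by omega
          have hc := hE3 (a + 1) (by omega) hsumL
          rw [Nat.add_sub_cancel, ef1, eb1, ef2] at hc
          have hV := V_Gmap μ hG a
          rw [if_pos (by omega)] at hV
          rw [hV]
          refine of_zmod ?_
          have hcz := to_zmod hc
          have hsz : ((μ.f a + μ.fbar a + μ.f (a + 1) : ℕ) : ZMod 2) = ((K + 1 : ℕ) : ZMod 2) := by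
            rw [hsum, show K + 2 - 1 = K + 1 from rfl]
          push_cast at hcz hsz ⊢
          linear_combination hcz - hsz - ((K : ZMod 2) + 1) * h2

lemma op_ext {l1 l2 : Overpartition} (hf : l1.f = l2.f) (hb : l1.fbar = l2.fbar) : l1 = l2 := by
  cases l1; cases l2; simp_all

lemma smallest_Gmap (μ : Overpartition) (hG : GoodHyp μ) : SmallestNonOverlined (Gmap μ) := by
  refine ⟨sLow μ + 1, ?_, ?_, ?_⟩
  · rw [Gmap_f_succ, if_pos rfl]; omega
  · rw [Gmap_fbar_succ, if_pos rfl]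
  · intro t ht
    match t with
    | 0 => exact ⟨Gmap_f_zero μ, Gmap_fbar_zero μ⟩
    | b + 1 =>
      have hb : b ≠ sLow μ := by omega
      have hz := hG.hlow b (by omega)
      rw [Gmap_f_succ, Gmap_fbar_succ, if_neg hb, if_neg hb]
      exact ⟨by omega, hz.2⟩

lemma sLow_Gmap (μ : Overpartition) (hG : GoodHyp μ) : sLow (Gmap μ) = sLow μ + 1 := by
  apply sLow_eq
  · left; rw [Gmap_f_succ, if_pos rfl]; omega
  · intro t ht
    match t with
    | 0 => exact ⟨Gmap_f_zero μ, Gmap_fbar_zero μ⟩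
    | b + 1 =>
      have hb : b ≠ sLow μ := by omega
      have hz := hG.hlow b (by omega)
      rw [Gmap_f_succ, Gmap_fbar_succ, if_neg hb, if_neg hb]
      exact ⟨by omega, hz.2⟩

lemma parts_le_wt (l : Overpartition) : l.parts ≤ l.wt := by
  unfold Overpartition.parts Overpartition.wt
  have key : ∀ v : ℕ →₀ ℕ, v 0 = 0 → (v.sum fun _ m => m) ≤ v.sum fun t m => t * m := by
    intro v hv
    apply Finset.sum_le_sum
    intro i hi
    have hi0 : i ≠ 0 := by
      intro h
      rw [h] at hi
      exact (Finsupp.mem_support_iff.mp hi) hv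
    have : 1 ≤ i := by omega
    calc v i = 1 * v i := (one_mul _).symm
    _ ≤ i * v i := Nat.mul_le_mul_right _ this
  exact Nat.add_le_add (key l.f l.f_zero) (key l.fbar l.fbar_zero)

noncomputable def Fmap (l : Overpartition) : Overpartition where
  f := Finsupp.erase 0
    ((Finsupp.comapDomain Nat.succ l.f Nat.succ_injective.injOn).update
      (sLow l - 1) (l.f (sLow l) - 1))
  fbar := Finsupp.erase 0
    ((Finsupp.comapDomain Nat.succ l.fbar Nat.succ_injective.injOn).update (sLow l - 1) 1)
  fbar_le_one := by
    intro t
    rcases eq_or_ne t 0 with rfl | ht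
    · rw [Finsupp.erase_same]; omega
    · rw [Finsupp.erase_ne ht, Finsupp.coe_update, Function.update_apply]
      rcases eq_or_ne t (sLow l - 1) with h | h
      · rw [if_pos h]
      · rw [if_neg h, Finsupp.comapDomain_apply]
        exact l.fbar_le_one _
  f_zero := Finsupp.erase_same
  fbar_zero := Finsupp.erase_same

lemma Fmap_f (l : Overpartition) (b : ℕ) (hb : b ≠ 0) :
    (Fmap l).f b = if b = sLow l - 1 then l.f (sLow l) - 1 else l.f (b + 1) := by
  show (Finsupp.erase 0 _) b = _
  rw [Finsupp.erase_ne hb, Finsupp.coe_update, Function.update_apply]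
  rcases eq_or_ne b (sLow l - 1) with h | h
  · rw [if_pos h, if_pos h]
  · rw [if_neg h, if_neg h, Finsupp.comapDomain_apply]

lemma Fmap_fbar (l : Overpartition) (b : ℕ) (hb : b ≠ 0) :
    (Fmap l).fbar b = if b = sLow l - 1 then 1 else l.fbar (b + 1) := by
  show (Finsupp.erase 0 _) b = _
  rw [Finsupp.erase_ne hb, Finsupp.coe_update, Function.update_apply]
  rcases eq_or_ne b (sLow l - 1) with h | h
  · rw [if_pos h, if_pos h]
  · rw [if_neg h, if_neg h, Finsupp.comapDomain_apply]

lemma good_S (l : Overpartition) (h : SmallestNonOverlined l) (hf1 : l.f 1 = 0) :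
    2 ≤ sLow l ∧ 1 ≤ l.f (sLow l) ∧ l.fbar (sLow l) = 0 ∧
      ∀ t < sLow l, l.f t = 0 ∧ l.fbar t = 0 := by
  obtain ⟨s, hpos, hbar, hlow⟩ := h
  have hsl : sLow l = s := sLow_eq l s (Or.inl (by omega)) hlow
  have hs0 : s ≠ 0 := by intro e; rw [e, l.f_zero] at hpos; omega
  have hs1 : s ≠ 1 := by intro e; rw [e, hf1] at hpos; omega
  rw [hsl]
  exact ⟨by omega, by omega, hbar, hlow⟩

lemma Fmap_good (l : Overpartition) (hs2 : 2 ≤ sLow l) (hfs : 1 ≤ l.f (sLow l))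
    (hlow : ∀ t < sLow l, l.f t = 0 ∧ l.fbar t = 0) :
    sLow (Fmap l) = sLow l - 1 ∧ SmallestOverlined (Fmap l) := by
  have mem : (Fmap l).fbar (sLow l - 1) = 1 := by
    rw [Fmap_fbar l _ (by omega), if_pos rfl]
  have low : ∀ t < sLow l - 1, (Fmap l).f t = 0 ∧ (Fmap l).fbar t = 0 := by
    intro t ht
    rcases eq_or_ne t 0 with rfl | h0
    · exact ⟨(Fmap l).f_zero, (Fmap l).fbar_zero⟩
    · rw [Fmap_f l t h0, Fmap_fbar l t h0, if_neg (by omega), if_neg (by omega)]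
      exact ⟨(hlow (t + 1) (by omega)).1, (hlow (t + 1) (by omega)).2⟩
  exact ⟨sLow_eq _ _ (Or.inr (by omega)) low, ⟨sLow l - 1, by omega, low⟩⟩

lemma Gmap_Fmap (l : Overpartition) (hs2 : 2 ≤ sLow l) (hfs : 1 ≤ l.f (sLow l))
    (hbar : l.fbar (sLow l) = 0)
    (hlow : ∀ t < sLow l, l.f t = 0 ∧ l.fbar t = 0) (hf1 : l.f 1 = 0) :
    Gmap (Fmap l) = l := by
  have hsF : sLow (Fmap l) = sLow l - 1 := (Fmap_good l hs2 hfs hlow).1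
  apply op_ext
  · ext a
    match a with
    | 0 => rw [Gmap_f_zero, l.f_zero]
    | b + 1 =>
      rw [Gmap_f_succ, hsF]
      rcases eq_or_ne b (sLow l - 1) with h | h
      · rw [if_pos h, Fmap_f l b (by omega), if_pos h]
        have hb1 : b + 1 = sLow l := by omega
        rw [hb1]
        omega
      · rw [if_neg h]
        rcases eq_or_ne b 0 with rfl | h0
        · rw [(Fmap l).f_zero]
          have : l.f (0 + 1) = 0 := hf1
          omega
        · rw [Fmap_f l b h0, if_neg h]
          omega
  · ext a
    match a with
    | 0 => rw [Gmap_fbar_zero, l.fbar_zero]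
    | b + 1 =>
      rw [Gmap_fbar_succ, hsF]
      rcases eq_or_ne b (sLow l - 1) with h | h
      · rw [if_pos h]
        have hb1 : b + 1 = sLow l := by omega
        rw [hb1, hbar]
      · rw [if_neg h]
        rcases eq_or_ne b 0 with rfl | h0
        · rw [(Fmap l).fbar_zero]
          have : l.fbar (0 + 1) = 0 := (hlow 1 (by omega)).2
          omega
        · rw [Fmap_fbar l b h0, if_neg h]

end RRGAux


/-- `G̃_{k,1}(m,n) = H̃_{k,k-1}(m,n-m)` for `k ≥ 2` (Theorem 3.1, (3.3)). -/
theorem G_one_eq_H_topshift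
    (k : ℕ) (hk : 2 ≤ k) (m n : ℕ) :
    {l : Overpartition | l.wt = n ∧ l.parts = m ∧ ECond k 1 l ∧ SmallestNonOverlined l}.ncard
      = {l : Overpartition |
          l.wt = n - m ∧ l.parts = m ∧ ECond k (k-1) l ∧ SmallestOverlined l}.ncard := by
  classical
  by_cases hmn : m ≤ n
  · have hinj : Set.InjOn RRGAux.Gmap
        {l : Overpartition | l.wt = n - m ∧ l.parts = m ∧ ECond k (k-1) l ∧ SmallestOverlined l} := by
      intro μ1 hμ1 μ2 hμ2 heq
      have hG1 := RRGAux.good_of_smallestOverlined μ1 hμ1.2.2.2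
      have hG2 := RRGAux.good_of_smallestOverlined μ2 hμ2.2.2.2
      have hsl : RRGAux.sLow μ1 = RRGAux.sLow μ2 := by
        have e1 := RRGAux.sLow_Gmap μ1 hG1
        have e2 := RRGAux.sLow_Gmap μ2 hG2
        rw [heq] at e1
        omega
      apply RRGAux.op_ext
      · ext a
        have e1 := RRGAux.Gmap_f_succ μ1 a
        have e2 := RRGAux.Gmap_f_succ μ2 a
        rw [heq, hsl] at e1
        rw [e2] at e1
        rcases eq_or_ne a (RRGAux.sLow μ2) with h | h
        · rw [if_pos h] at e1; omega
        · rw [if_neg h] at e1; omega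
      · ext a
        have e1 := RRGAux.Gmap_fbar_succ μ1 a
        have e2 := RRGAux.Gmap_fbar_succ μ2 a
        rw [heq, hsl] at e1
        rw [e2] at e1
        rcases eq_or_ne a (RRGAux.sLow μ2) with h | h
        · have k1 := hG1.h1
          have k2 := hG2.h1
          rw [hsl] at k1
          rw [h, k1, k2]
        · simp only [if_neg h] at e1; omega
    have key : {l : Overpartition | l.wt = n ∧ l.parts = m ∧ ECond k 1 l ∧ SmallestNonOverlined l}
        = RRGAux.Gmap ''
          {l : Overpartition | l.wt = n - m ∧ l.parts = m ∧ ECond k (k-1) l ∧ SmallestOverlined l} := by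
      ext l
      simp only [Set.mem_setOf_eq, Set.mem_image]
      constructor
      · rintro ⟨hwt, hparts, hE, hsm⟩
        have hf1 : l.f 1 = 0 := by have := hE.1; omega
        obtain ⟨hs2, hfs, hbar, hlow⟩ := RRGAux.good_S l hsm hf1
        obtain ⟨hsF, hso⟩ := RRGAux.Fmap_good l hs2 hfs hlow
        have hGF : RRGAux.Gmap (RRGAux.Fmap l) = l := RRGAux.Gmap_Fmap l hs2 hfs hbar hlow hf1
        have hGg := RRGAux.good_of_smallestOverlined _ hso
        have hp : (RRGAux.Fmap l).parts = m := by
          have := RRGAux.parts_Gmap _ hGg.h1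
          rw [hGF] at this
          omega
        have hw : (RRGAux.Fmap l).wt = n - m := by
          have := RRGAux.wt_Gmap _ hGg.h1
          rw [hGF] at this
          omega
        exact ⟨RRGAux.Fmap l,
          ⟨hw, hp, RRGAux.ECond_bwd _ hGg k hk (by rw [hGF]; exact hE), hso⟩, hGF⟩
      · rintro ⟨μ, ⟨hwt, hparts, hE, hsm⟩, rfl⟩
        have hG := RRGAux.good_of_smallestOverlined μ hsm
        refine ⟨?_, ?_, RRGAux.ECond_fwd μ hG k hk hE, RRGAux.smallest_Gmap μ hG⟩
        · rw [RRGAux.wt_Gmap μ hG.h1, hwt, hparts]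
          omega
        · rw [RRGAux.parts_Gmap μ hG.h1, hparts]
    rw [key, Set.ncard_image_of_injOn hinj]
  · have e1 : {l : Overpartition | l.wt = n ∧ l.parts = m ∧ ECond k 1 l ∧ SmallestNonOverlined l}
        = ∅ := by
      ext l
      simp only [Set.mem_setOf_eq, Set.mem_empty_iff_false, iff_false]
      rintro ⟨hwt, hparts, -, -⟩
      have := RRGAux.parts_le_wt l
      omega
    have e2 : {l : Overpartition |
        l.wt = n - m ∧ l.parts = m ∧ ECond k (k-1) l ∧ SmallestOverlined l} = ∅ := by
      ext l
      simp only [Set.mem_setOf_eq, Set.mem_empty_iff_false, iff_false]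
      rintro ⟨hwt, hparts, -, -⟩
      have := RRGAux.parts_le_wt l
      omega
    rw [e1, e2]
end

section
/- Fix integers N₁ ≥ N₂ ≥ ⋯ ≥ N_{k−1} ≥ 0. For k > i ≥ 2 and all n, the number G̃_{N₁,…,N_{k−1};i}(n) of overpartitions counted by G̃_{k,i}(m,n) (with m = N₁+⋯+N_{k−1}) whose Gordon marking has exactly N_r r-marked parts for 1 ≤ r ≤ k−1 equals H̃_{N₁,…,N_{k−1};i−1}(n), defined analogously from H̃_{k,i−1}. For k > i = 1, G̃_{N₁,…,N_{k−1};1}(n) = H̃_{N₁,…,N_{k−1};k−1}(n − N₁ − ⋯ − N_{k−1}). -/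
open scoped BigOperators

namespace GHproof

def strip1 : OPart × ℕ → ℕ × ℕ := fun q => (q.1.1, q.2)

def marksWhereS (acc : List (ℕ × ℕ)) (test : ℕ → Bool) : Finset ℕ :=
  ((acc.filter (fun q => test q.1)).map (fun q => q.2)).toFinset

def markOfS (fb : ℕ → ℕ) (acc : List (ℕ × ℕ)) (s : ℕ) : ℕ :=
  let same := marksWhereS acc (fun a => decide (a = s))
  let prev := marksWhereS acc (fun a => decide (a + 1 = s))
  if fb s = 1 then
    mex1 (same ∪ (if h : prev.Nonempty then prev.erase (prev.min' h) else prev))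
  else mex1 (same ∪ prev)

def markFoldS (fb : ℕ → ℕ) : List ℕ → List (ℕ × ℕ) → List (ℕ × ℕ)
  | [], acc => acc
  | s :: rest, acc => markFoldS fb rest (acc ++ [(s, markOfS fb acc s)])

lemma marksWhere_eq (acc : List (OPart × ℕ)) (t : ℕ → Bool) :
    marksWhere acc (fun p => t p.1) = marksWhereS (acc.map strip1) t := by
  simp [marksWhere, marksWhereS, List.filter_map, strip1, Function.comp_def, List.map_map]

lemma gordonMarkOf_eq (l : Overpartition) (acc : List (OPart × ℕ)) (p : OPart) :
    gordonMarkOf l acc p = markOfS l.fbar (acc.map strip1) p.1 := by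
  unfold gordonMarkOf markOfS
  rw [← marksWhere_eq acc (fun a => decide (a = p.1)),
    ← marksWhere_eq acc (fun a => decide (a + 1 = p.1))]

lemma strip_markFold (l : Overpartition) :
    ∀ (L : List OPart) (acc : List (OPart × ℕ)),
    (markFold (gordonMarkOf l) L acc).map strip1
      = markFoldS l.fbar (L.map Prod.fst) (acc.map strip1)
  | [], acc => by simp [markFold, markFoldS]
  | p :: rest, acc => by
    simp only [List.map_cons]
    rw [markFold, markFoldS, strip_markFold l rest]
    simp [gordonMarkOf_eq, strip1]

lemma markOfS_of_prev_empty (fb₁ fb₂ : ℕ → ℕ) (acc : List (ℕ × ℕ)) (s : ℕ)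
    (h : ∀ q ∈ acc, ¬ (q.1 + 1 = s)) :
    markOfS fb₁ acc s = markOfS fb₂ acc s := by
  have hprev : marksWhereS acc (fun a => decide (a + 1 = s)) = ∅ := by
    have : acc.filter (fun q => decide (q.1 + 1 = s)) = [] := by
      rw [List.filter_eq_nil_iff]
      intro q hq
      simpa using h q hq
    simp [marksWhereS, this]
  simp only [markOfS, hprev]
  split_ifs with h1 h2 <;> simp [Finset.not_nonempty_empty] at *

lemma markFoldS_congr (fb₁ fb₂ : ℕ → ℕ) (m : ℕ) (hm : 1 ≤ m)
    (hfb : ∀ t, t ≠ m → fb₁ t = fb₂ t) :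
    ∀ (S : List ℕ) (acc : List (ℕ × ℕ)), (∀ s ∈ S, m ≤ s) → (∀ q ∈ acc, m ≤ q.1) →
    markFoldS fb₁ S acc = markFoldS fb₂ S acc
  | [], acc, _, _ => rfl
  | s :: rest, acc, hS, hacc => by
    have hmark : markOfS fb₁ acc s = markOfS fb₂ acc s := by
      by_cases hs : s = m
      · subst hs
        exact markOfS_of_prev_empty _ _ _ _ (fun q hq => by
          have := hacc q hq; omega)
      · simp only [markOfS, hfb s hs]
    rw [markFoldS, markFoldS, hmark]
    exact markFoldS_congr fb₁ fb₂ m hm hfb rest _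
      (fun x hx => hS x (List.mem_cons_of_mem _ hx))
      (fun q hq => by
        rcases List.mem_append.1 hq with h | h
        · exact hacc q h
        · simp at h; subst h; exact hS s (List.mem_cons_self))

lemma marksWhereS_map_shift (acc : List (ℕ × ℕ)) (t t' : ℕ → Bool)
    (h : ∀ q ∈ acc, t (q.1 - 1) = t' q.1) :
    marksWhereS (acc.map (fun q => (q.1 - 1, q.2))) t = marksWhereS acc t' := by
  unfold marksWhereS
  rw [List.filter_map]
  have : List.filter ((fun q => t q.1) ∘ (fun q : ℕ × ℕ => (q.1 - 1, q.2))) acc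
      = List.filter (fun q => t' q.1) acc := by
    apply List.filter_congr
    intro q hq
    simpa [Function.comp] using congrArg id (h q hq)
  rw [this, List.map_map]
  simp [Function.comp_def]

lemma markFoldS_shift (fb : ℕ → ℕ) :
    ∀ (S : List ℕ) (acc : List (ℕ × ℕ)), (∀ s ∈ S, 2 ≤ s) → (∀ q ∈ acc, 2 ≤ q.1) →
    markFoldS (fun t => fb (t + 1)) (S.map (· - 1)) (acc.map (fun q => (q.1 - 1, q.2)))
      = (markFoldS fb S acc).map (fun q => (q.1 - 1, q.2))
  | [], acc, _, _ => rfl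
  | s :: rest, acc, hS, hacc => by
    have hs2 : 2 ≤ s := hS s (List.mem_cons_self)
    have hmark : markOfS (fun t => fb (t + 1)) (acc.map (fun q => (q.1 - 1, q.2))) (s - 1)
        = markOfS fb acc s := by
      unfold markOfS
      have h1 : marksWhereS (acc.map (fun q => (q.1 - 1, q.2))) (fun a => decide (a = s - 1))
          = marksWhereS acc (fun a => decide (a = s)) := by
        apply marksWhereS_map_shift
        intro q hq
        have := hacc q hq
        simp only [decide_eq_decide]
        omega
      have h2 : marksWhereS (acc.map (fun q => (q.1 - 1, q.2))) (fun a => decide (a + 1 = s - 1))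
          = marksWhereS acc (fun a => decide (a + 1 = s)) := by
        apply marksWhereS_map_shift
        intro q hq
        have := hacc q hq
        simp only [decide_eq_decide]
        omega
      have hss : s - 1 + 1 = s := by omega
      simp only [h1, h2, hss]
    rw [List.map_cons, markFoldS, markFoldS, hmark]
    have hmap : (acc.map (fun q : ℕ × ℕ => (q.1 - 1, q.2))) ++ [(s - 1, markOfS fb acc s)]
        = (acc ++ [(s, markOfS fb acc s)]).map (fun q => (q.1 - 1, q.2)) := by
      simp
    rw [hmap]
    exact markFoldS_shift fb rest _ (fun x hx => hS x (List.mem_cons_of_mem _ hx))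
      (fun q hq => by
        rcases List.mem_append.1 hq with h | h
        · exact hacc q h
        · simp at h; subst h; exact hs2)

end GHproof
namespace GHproof

def szL (l : Overpartition) (B : ℕ) : List ℕ :=
  (List.range B).flatMap (fun t => List.replicate (l.fbar (t+1) + l.f (t+1)) (t+1))

lemma map_fst_partsListUpTo (l : Overpartition) (B : ℕ) :
    (partsListUpTo l B).map Prod.fst = szL l B := by
  unfold partsListUpTo szL
  rw [List.map_flatMap]
  congr 1
  funext t
  by_cases h : l.fbar (t+1) = 1
  · simp [h, List.replicate_add]
  · have h0 : l.fbar (t+1) = 0 := by have := l.fbar_le_one (t+1); omega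
    simp [h, h0]

lemma zero_of_obound_le (l : Overpartition) {t : ℕ} (h : obound l ≤ t) :
    l.f t = 0 ∧ l.fbar t = 0 := by
  constructor
  · by_contra hf
    have ht : t ∈ l.f.support := Finsupp.mem_support_iff.2 hf
    have : t ∈ l.f.support ∪ l.fbar.support := Finset.mem_union_left _ ht
    have := Finset.le_sup (f := id) this
    simp only [id] at this
    unfold obound at h
    omega
  · by_contra hf
    have ht : t ∈ l.fbar.support := Finsupp.mem_support_iff.2 hf
    have : t ∈ l.f.support ∪ l.fbar.support := Finset.mem_union_right _ ht
    have := Finset.le_sup (f := id) this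
    simp only [id] at this
    unfold obound at h
    omega

lemma szL_stable (l : Overpartition) {B B' : ℕ} (h : obound l ≤ B) (h' : B ≤ B') :
    szL l B' = szL l B := by
  obtain ⟨c, rfl⟩ := Nat.exists_eq_add_of_le h'
  unfold szL
  rw [List.range_add, List.flatMap_append]
  have : ((List.map (fun x => B + x) (List.range c)).flatMap
      (fun t => List.replicate (l.fbar (t+1) + l.f (t+1)) (t+1))) = [] := by
    rw [List.flatMap_eq_nil_iff]
    intro L hL
    rw [List.mem_map] at hL
    obtain ⟨x, hx, rfl⟩ := hL
    have hz := zero_of_obound_le l (t := B + x + 1) (by omega)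
    simp [hz.1, hz.2]
  rw [this, List.append_nil]

lemma mem_szL (l : Overpartition) (B : ℕ) {x : ℕ} (hx : x ∈ szL l B) :
    1 ≤ x ∧ 0 < l.fbar x + l.f x := by
  unfold szL at hx
  rw [List.mem_flatMap] at hx
  obtain ⟨t, _, hmem⟩ := hx
  rw [List.mem_replicate] at hmem
  obtain ⟨hne, rfl⟩ := hmem
  exact ⟨by omega, by omega⟩

lemma gordonN_eq (l : Overpartition) {B : ℕ} (h : obound l ≤ B) (r : ℕ) :
    gordonN l r
      = ((markFoldS l.fbar (szL l B) []).filter (fun q => decide (q.2 = r))).length := by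
  have h1 := strip_markFold l (partsList l) []
  simp only [List.map_nil] at h1
  unfold partsList at h1
  rw [map_fst_partsListUpTo] at h1
  rw [szL_stable l (le_refl (obound l)) h]
  unfold gordonN gordonMarked
  rw [← h1, List.filter_map]
  have : ((fun q : ℕ × ℕ => decide (q.2 = r)) ∘ strip1) = (fun q : OPart × ℕ => decide (q.2 = r)) := rfl
  rw [this, List.length_map]
  rfl

lemma szL_succ (l : Overpartition) (B : ℕ) :
    szL l (B+1) = szL l B ++ List.replicate (l.fbar (B+1) + l.f (B+1)) (B+1) := by
  simp [szL, List.range_succ]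

lemma length_szL (l : Overpartition) :
    ∀ B, (szL l B).length = ∑ t ∈ Finset.range B, (l.fbar (t+1) + l.f (t+1))
  | 0 => by simp [szL]
  | B+1 => by rw [szL_succ, Finset.sum_range_succ, List.length_append, length_szL l B,
      List.length_replicate]

lemma sum_szL (l : Overpartition) :
    ∀ B, (szL l B).sum = ∑ t ∈ Finset.range B, (t+1) * (l.fbar (t+1) + l.f (t+1))
  | 0 => by simp [szL]
  | B+1 => by
      rw [szL_succ, Finset.sum_range_succ, List.sum_append, sum_szL l B, List.sum_replicate,
        smul_eq_mul, mul_comm]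

lemma finsupp_sum_eq (g : ℕ →₀ ℕ) (h0 : g 0 = 0) (φ : ℕ → ℕ → ℕ) (hφ : ∀ t, φ t 0 = 0)
    {B : ℕ} (hB : ∀ t, B < t → g t = 0) :
    g.sum φ = ∑ t ∈ Finset.range B, φ (t+1) (g (t+1)) := by
  rw [Finsupp.sum_of_support_subset g (s := Finset.range (B+1)) (fun t ht => by
    rw [Finset.mem_range]
    by_contra hc
    exact (Finsupp.mem_support_iff.1 ht) (hB t (by omega))) φ (fun i _ => hφ i)]
  rw [Finset.sum_range_succ']
  simp [h0, hφ]

lemma parts_eq (l : Overpartition) {B : ℕ} (h : obound l ≤ B) :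
    l.parts = (szL l B).length := by
  rw [length_szL]
  unfold Overpartition.parts
  rw [finsupp_sum_eq l.f l.f_zero _ (fun _ => rfl) (B := B) (fun t ht => (zero_of_obound_le l (by omega)).1),
    finsupp_sum_eq l.fbar l.fbar_zero _ (fun _ => rfl) (B := B) (fun t ht => (zero_of_obound_le l (by omega)).2),
    ← Finset.sum_add_distrib]
  apply Finset.sum_congr rfl
  intro t _
  omega

lemma wt_eq (l : Overpartition) {B : ℕ} (h : obound l ≤ B) :
    l.wt = (szL l B).sum := by
  rw [sum_szL]
  unfold Overpartition.wt
  rw [finsupp_sum_eq l.f l.f_zero _ (fun t => by simp) (B := B) (fun t ht => (zero_of_obound_le l (by omega)).1),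
    finsupp_sum_eq l.fbar l.fbar_zero _ (fun t => by simp) (B := B) (fun t ht => (zero_of_obound_le l (by omega)).2),
    ← Finset.sum_add_distrib]
  apply Finset.sum_congr rfl
  intro t _
  ring

lemma V_succ (l : Overpartition) (t : ℕ) : l.V (t+1) = l.V t + l.fbar (t+1) :=
  Finset.sum_Icc_succ_top (by omega) _

lemma V_zero (l : Overpartition) : l.V 0 = 0 := by simp [Overpartition.V]

lemma length_le_sum : ∀ L : List ℕ, (∀ x ∈ L, 1 ≤ x) → L.length ≤ L.sum
  | [], _ => le_refl 0
  | x :: L, h => by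
    have h1 := h x (List.mem_cons_self)
    have h2 := length_le_sum L (fun y hy => h y (List.mem_cons_of_mem _ hy))
    simp only [List.length_cons, List.sum_cons]
    omega

lemma parts_le_wt (l : Overpartition) : l.parts ≤ l.wt := by
  rw [parts_eq l (le_refl _), wt_eq l (le_refl _)]
  exact length_le_sum _ (fun x hx => (mem_szL l _ hx).1)

lemma parts_pos (l : Overpartition) {x : ℕ} (h : 0 < l.fbar x + l.f x) : 0 < l.parts := by
  rw [parts_eq l (le_refl _), length_szL]
  have hx1 : 1 ≤ x := by
    rcases Nat.eq_zero_or_pos x with rfl | h1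
    · rw [l.f_zero, l.fbar_zero] at h; omega
    · exact h1
  have hxB : x - 1 < obound l := by
    have : x ∈ l.f.support ∪ l.fbar.support := by
      rcases Nat.lt_or_ge 0 (l.f x) with h1 | h1
      · exact Finset.mem_union_left _ (Finsupp.mem_support_iff.2 (by omega))
      · exact Finset.mem_union_right _ (Finsupp.mem_support_iff.2 (by omega))
    have := Finset.le_sup (f := id) this
    simp only [id] at this
    unfold obound
    omega
  calc 0 < l.fbar (x - 1 + 1) + l.f (x - 1 + 1) := by
        have : x - 1 + 1 = x := by omega
        rw [this]; exact h
    _ ≤ ∑ t ∈ Finset.range (obound l), (l.fbar (t+1) + l.f (t+1)) :=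
        Finset.single_le_sum (f := fun t => l.fbar (t+1) + l.f (t+1))
          (fun _ _ => Nat.zero_le _) (Finset.mem_range.2 hxB)

end GHproof
namespace GHproof

lemma V_eq_zero_of_fbar_zero (l : Overpartition) :
    ∀ t, (∀ r, r ≤ t → l.fbar r = 0) → l.V t = 0
  | 0, _ => V_zero l
  | t+1, h => by
    rw [V_succ, V_eq_zero_of_fbar_zero l t (fun r hr => h r (by omega)), h (t+1) (le_refl _)]

lemma mul_pred (a b : ℕ) (h : 1 ≤ b) : a * (b - 1) + a * 1 = a * b := by
  obtain ⟨c, hc⟩ := Nat.exists_eq_add_of_le h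
  rw [hc, Nat.add_sub_cancel_left]
  ring

structure ToggleRel (l m : Overpartition) (s : ℕ) : Prop where
  hs1 : 1 ≤ s
  hlow : ∀ t, t < s → l.f t = 0 ∧ l.fbar t = 0
  hbar : l.fbar s = 0
  hpos : 1 ≤ l.f s
  hf : ∀ t, m.f t = if t = s then l.f s - 1 else l.f t
  hfb : ∀ t, m.fbar t = if t = s then 1 else l.fbar t

namespace ToggleRel

variable {l m : Overpartition} {s : ℕ} (R : ToggleRel l m s)

include R

lemma hfs : m.f s = l.f s - 1 := by rw [R.hf]; simp
lemma hfbs : m.fbar s = 1 := by rw [R.hfb]; simp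
lemma hft {t : ℕ} (h : t ≠ s) : m.f t = l.f t := by rw [R.hf, if_neg h]
lemma hfbt {t : ℕ} (h : t ≠ s) : m.fbar t = l.fbar t := by rw [R.hfb, if_neg h]

lemma counts (t : ℕ) : m.fbar t + m.f t = l.fbar t + l.f t := by
  by_cases h : t = s
  · subst h
    rw [R.hfs, R.hfbs, R.hbar]
    have := R.hpos
    omega
  · rw [R.hft h, R.hfbt h]

lemma szL_eq (B : ℕ) : szL m B = szL l B :=
  congrArg (List.range B).flatMap (funext fun t => by rw [R.counts])

lemma mem_szL_ge {B x : ℕ} (hx : x ∈ szL l B) : s ≤ x := by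
  have h := mem_szL l B hx
  by_contra hc
  push_neg at hc
  have := R.hlow x hc
  omega

lemma gordonN_eq (r : ℕ) : gordonN m r = gordonN l r := by
  rw [GHproof.gordonN_eq m (le_max_right (obound l) (obound m)) r,
    GHproof.gordonN_eq l (le_max_left (obound l) (obound m)) r, R.szL_eq]
  congr 2
  exact markFoldS_congr m.fbar l.fbar s R.hs1
    (fun t hts => by rw [R.hfbt hts]) _ []
    (fun x hx => R.mem_szL_ge hx) (fun q hq => by simp at hq)

lemma parts_eq : m.parts = l.parts := by
  rw [GHproof.parts_eq m (le_max_right (obound l) (obound m)),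
    GHproof.parts_eq l (le_max_left (obound l) (obound m)), R.szL_eq]

lemma wt_eq : m.wt = l.wt := by
  rw [GHproof.wt_eq m (le_max_right (obound l) (obound m)),
    GHproof.wt_eq l (le_max_left (obound l) (obound m)), R.szL_eq]

lemma V_all (t : ℕ) : m.V t = l.V t + (if s ≤ t then 1 else 0) := by
  have h1 := R.hs1
  induction t with
  | zero =>
    rw [V_zero, V_zero, if_neg (by omega)]
  | succ t ih =>
    rw [V_succ, V_succ, ih, R.hfb (t+1)]
    by_cases h : t + 1 = s
    · have hb0 : l.fbar (t+1) = 0 := by rw [h]; exact R.hbar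
      rw [if_pos h, hb0, if_neg (show ¬ s ≤ t by omega), if_pos (show s ≤ t + 1 by omega)]
    · rw [if_neg h]
      by_cases h3 : s ≤ t
      · rw [if_pos h3, if_pos (by omega)]
        omega
      · rw [if_neg h3, if_neg (by omega)]
        omega

lemma V_ge {t : ℕ} (h : s ≤ t) : m.V t = l.V t + 1 := by rw [R.V_all, if_pos h]

lemma V_lt {t : ℕ} (h : t < s) : m.V t = l.V t := by
  rw [R.V_all, if_neg (by omega)]; omega

lemma Vl_low {t : ℕ} (h : t < s) : l.V t = 0 :=
  V_eq_zero_of_fbar_zero l t (fun r hr => (R.hlow r (by omega)).2)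

lemma smallestOverlined : SmallestOverlined m :=
  ⟨s, by rw [R.hfbs]; omega, fun t ht => by
    rw [R.hft (by omega), R.hfbt (by omega)]
    exact R.hlow t ht⟩

lemma smallestNonOverlined : SmallestNonOverlined l :=
  ⟨s, R.hpos, R.hbar, R.hlow⟩

lemma econd_iff {k i : ℕ} (hi : 2 ≤ i) (hik : i < k) :
    ECond k i l ↔ ECond k (i-1) m := by
  have hk : 3 ≤ k := by omega
  constructor
  · rintro ⟨hA, hB, hC⟩
    refine ⟨?_, ?_, ?_⟩
    · rw [R.hf 1]
      split_ifs with h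
      · subst h
        have := R.hpos
        omega
      · have : (1 : ℕ) < s := by have := R.hs1; omega
        have := (R.hlow 1 this).1
        omega
    · intro t ht
      by_cases hts : t = s
      · subst hts
        rw [R.hfs, R.hfbs, R.hft (show t + 1 ≠ t by omega)]
        have := hB t ht
        rw [R.hbar] at this
        have := R.hpos
        omega
      · by_cases hts1 : t + 1 = s
        · have hs1 := R.hs1
          have h1 := R.hlow t (show t < s by omega)
          have hBs := hB s (show 1 ≤ s by omega)
          rw [R.hbar] at hBs
          rw [R.hft hts, R.hfbt hts, R.hf (t+1), if_pos hts1, h1.1, h1.2]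
          omega
        · rw [R.hft hts, R.hfbt hts, R.hft hts1]
          exact hB t ht
    · intro t ht hsum
      by_cases hts : t = s
      · subst hts
        rw [R.hfs, R.hfbs, R.hft (by omega : t + 1 ≠ t)] at hsum ⊢
        have hsum' : l.f t + l.fbar t + l.f (t+1) = k - 1 := by
          rw [R.hbar]; have := R.hpos; omega
        have hC' := hC t ht hsum'
        rw [R.hbar] at hC'
        rw [R.V_ge (le_refl t)]
        have e1 := mul_pred t (l.f t) R.hpos
        unfold Nat.ModEq at hC' ⊢
        set a := t * l.f t with ha
        set b := (t+1) * l.f (t+1) with hb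
        set c := t * (l.f t - 1) with hc
        omega
      · by_cases hts1 : t + 1 = s
        · exfalso
          have h1 := R.hlow t (by omega)
          rw [R.hft hts, R.hfbt hts] at hsum
          rw [R.hf (t+1), if_pos hts1] at hsum
          have hBs := hB s (by omega)
          rw [R.hbar] at hBs
          omega
        · rw [R.hft hts, R.hfbt hts, R.hft hts1] at hsum ⊢
          by_cases hlt : t < s
          · exfalso
            have h1 := R.hlow t hlt
            have h2 := (R.hlow (t+1) (by omega)).1
            omega
          · rw [R.V_ge (by omega)]
            have hC' := hC t ht hsum
            unfold Nat.ModEq at hC' ⊢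
            set a := t * l.f t with ha
            set b := (t+1) * l.f (t+1) with hb
            set c := t * l.fbar t with hc
            omega
  · rintro ⟨hA, hB, hC⟩
    refine ⟨?_, ?_, ?_⟩
    · by_cases h : (1 : ℕ) = s
      · have h2 := R.hpos
        rw [← h] at h2
        rw [R.hf 1, if_pos h, ← h] at hA
        omega
      · rw [← R.hft h]
        omega
    · intro t ht
      by_cases hts : t = s
      · subst hts
        have := hB t ht
        rw [R.hfs, R.hfbs, R.hft (by omega : t + 1 ≠ t)] at this
        rw [R.hbar]
        have := R.hpos
        omega
      · by_cases hts1 : t + 1 = s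
        · have h1 := R.hlow t (by omega)
          have h2 := hB s (by omega)
          rw [R.hfs, R.hfbs, R.hft (show s + 1 ≠ s by omega)] at h2
          have h3 := R.hpos
          rw [h1.1, h1.2, hts1]
          omega
        · have := hB t ht
          rw [R.hft hts, R.hfbt hts, R.hft hts1] at this
          exact this
    · intro t ht hsum
      by_cases hts : t = s
      · subst hts
        have hsum' : m.f t + m.fbar t + m.f (t+1) = k - 1 := by
          rw [R.hfs, R.hfbs, R.hft (by omega : t + 1 ≠ t)]
          rw [R.hbar] at hsum
          have := R.hpos
          omega
        have hC' := hC t ht hsum'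
        rw [R.hfs, R.hfbs, R.hft (by omega : t + 1 ≠ t), R.V_ge (le_refl t)] at hC'
        rw [R.hbar]
        have e1 := mul_pred t (l.f t) R.hpos
        unfold Nat.ModEq at hC' ⊢
        set a := t * l.f t with ha
        set b := (t+1) * l.f (t+1) with hb
        set c := t * (l.f t - 1) with hc
        omega
      · by_cases hts1 : t + 1 = s
        · -- t = s - 1 : the nonvacuous boundary case
          have h1 := R.hlow t (by omega)
          rw [h1.1, h1.2, hts1] at hsum
          -- hsum : 0 + 0 + l.f s = k - 1
          have hBs := hB s (by omega)
          rw [R.hfs, R.hfbs, R.hft (show s + 1 ≠ s by omega)] at hBs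
          have hp := R.hpos
          have hf1 : l.f (s+1) = 0 := by omega
          have hsum' : m.f s + m.fbar s + m.f (s+1) = k - 1 := by
            rw [R.hfs, R.hfbs, R.hft (show s + 1 ≠ s by omega), hf1]
            omega
          have hC' := hC s (by omega) hsum'
          rw [R.hfs, R.hfbs, R.hft (show s + 1 ≠ s by omega), hf1,
            R.V_ge (le_refl s)] at hC'
          have hV1 : l.V s = 0 := V_eq_zero_of_fbar_zero l s (fun r hr => by
            rcases Nat.lt_or_ge r s with h | h
            · exact (R.hlow r h).2
            · have : r = s := by omega
              rw [this]; exact R.hbar)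
          rw [hV1] at hC'
          have hVt : l.V t = 0 := R.Vl_low (by omega)
          rw [h1.1, h1.2, hts1, hVt]
          have e1 := mul_pred s (l.f s) R.hpos
          unfold Nat.ModEq at hC' ⊢
          set a := s * l.f s with ha
          set c := s * (l.f s - 1) with hc
          omega
        · by_cases hlt : t < s
          · exfalso
            have h1 := R.hlow t hlt
            have h2 := (R.hlow (t+1) (by omega)).1
            omega
          · have hsum' : m.f t + m.fbar t + m.f (t+1) = k - 1 := by
              rw [R.hft hts, R.hfbt hts, R.hft hts1]; exact hsum
            have hC' := hC t ht hsum'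
            rw [R.hft hts, R.hfbt hts, R.hft hts1, R.V_ge (by omega)] at hC'
            unfold Nat.ModEq at hC' ⊢
            set a := t * l.f t with ha
            set b := (t+1) * l.f (t+1) with hb
            set c := t * l.fbar t with hc
            omega

end ToggleRel

end GHproof
namespace GHproof

lemma mul_succ_id (a b : ℕ) : (a + 1) * b = a * b + b := by ring

lemma sum_map_pred (L : List ℕ) (h : ∀ x ∈ L, 1 ≤ x) :
    (L.map (· - 1)).sum + L.length = L.sum := by
  induction L with
  | nil => rfl
  | cons x L ih =>
    have h1 := h x (List.mem_cons_self)
    have h2 := ih (fun y hy => h y (List.mem_cons_of_mem _ hy))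
    simp only [List.map_cons, List.sum_cons, List.length_cons]
    omega

structure ShiftRel (l m : Overpartition) (u : ℕ) : Prop where
  hu : 1 ≤ u
  hlow : ∀ t, t < u + 1 → l.f t = 0 ∧ l.fbar t = 0
  hbar : l.fbar (u+1) = 0
  hpos : 1 ≤ l.f (u+1)
  hf : ∀ t, m.f t = if t = u then l.f (u+1) - 1 else l.f (t+1)
  hfb : ∀ t, m.fbar t = if t = u then 1 else l.fbar (t+1)

namespace ShiftRel

variable {l m : Overpartition} {u : ℕ} (R : ShiftRel l m u)

include R

lemma hfs : m.f u = l.f (u+1) - 1 := by rw [R.hf]; simp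
lemma hfbs : m.fbar u = 1 := by rw [R.hfb]; simp
lemma hft {t : ℕ} (h : t ≠ u) : m.f t = l.f (t+1) := by rw [R.hf, if_neg h]
lemma hfbt {t : ℕ} (h : t ≠ u) : m.fbar t = l.fbar (t+1) := by rw [R.hfb, if_neg h]

lemma counts (t : ℕ) : m.fbar t + m.f t = l.fbar (t+1) + l.f (t+1) := by
  by_cases h : t = u
  · subst h
    rw [R.hfs, R.hfbs, R.hbar]
    have := R.hpos
    omega
  · rw [R.hft h, R.hfbt h]

lemma szL_shift (B : ℕ) : szL m B = (szL l (B+1)).map (· - 1) := by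
  have hu := R.hu
  unfold szL
  rw [List.range_succ_eq_map, List.flatMap_cons]
  have h1 := R.hlow 1 (by omega)
  rw [show (0:ℕ) + 1 = 1 from rfl, h1.1, h1.2]
  simp only [Nat.add_zero, Nat.zero_add, List.replicate_zero, List.nil_append,
    List.flatMap_map, List.map_flatMap, List.map_replicate, Nat.succ_eq_add_one]
  apply congrArg (List.range B).flatMap
  funext t
  rw [R.counts (t+1)]
  congr 1

lemma mem_szL_l {B x : ℕ} (hx : x ∈ szL l B) : u + 1 ≤ x := by
  have h := mem_szL l B hx
  by_contra hc
  push_neg at hc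
  have := R.hlow x hc
  omega

lemma parts_eq : m.parts = l.parts := by
  rw [GHproof.parts_eq m (le_max_right (obound l + 1) (obound m)),
    GHproof.parts_eq l (show obound l ≤ max (obound l + 1) (obound m) + 1 by
      have := le_max_left (obound l + 1) (obound m); omega),
    R.szL_shift, List.length_map]

lemma wt_eq : m.wt + l.parts = l.wt := by
  have hB : obound l ≤ max (obound l + 1) (obound m) + 1 := by
    have := le_max_left (obound l + 1) (obound m); omega
  rw [GHproof.wt_eq m (le_max_right (obound l + 1) (obound m)),
    GHproof.wt_eq l hB, GHproof.parts_eq l hB, R.szL_shift]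
  exact sum_map_pred _ (fun x hx => (mem_szL l _ hx).1)

lemma gordonN_eq (r : ℕ) : gordonN m r = gordonN l r := by
  set B := max (obound l + 1) (obound m) with hBdef
  have hBl : obound l ≤ B + 1 := by
    have := le_max_left (obound l + 1) (obound m); omega
  rw [GHproof.gordonN_eq m (le_max_right (obound l + 1) (obound m)) r,
    GHproof.gordonN_eq l hBl r, R.szL_shift]
  have h1 : markFoldS m.fbar ((szL l (B+1)).map (· - 1)) []
      = markFoldS (fun t => l.fbar (t+1)) ((szL l (B+1)).map (· - 1)) [] := by
    apply markFoldS_congr m.fbar (fun t => l.fbar (t+1)) u R.hu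
      (fun t ht => by rw [R.hfbt ht])
    · intro x hx
      rw [List.mem_map] at hx
      obtain ⟨y, hy, rfl⟩ := hx
      have := R.mem_szL_l hy
      omega
    · intro q hq; simp at hq
  have h2 := markFoldS_shift l.fbar (szL l (B+1)) []
    (fun x hx => by have := R.mem_szL_l hx; have := R.hu; omega) (fun q hq => by simp at hq)
  simp only [List.map_nil] at h2
  rw [h1, h2, List.filter_map, List.length_map]
  rfl

lemma V_all (t : ℕ) : m.V t = l.V (t+1) + (if u ≤ t then 1 else 0) := by
  have hu := R.hu
  induction t with
  | zero =>
    rw [V_zero, if_neg (by omega)]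
    have h1 := R.hlow 1 (by omega)
    rw [show (0:ℕ) + 1 = 1 from rfl, show l.V 1 = l.V 0 + l.fbar 1 from V_succ l 0,
      V_zero, h1.2]
  | succ t ih =>
    rw [V_succ, V_succ, ih, R.hfb (t+1)]
    by_cases h : t + 1 = u
    · have hb0 : l.fbar (t+1+1) = 0 := by rw [h]; exact R.hbar
      rw [if_pos h, hb0, if_neg (show ¬ u ≤ t by omega), if_pos (show u ≤ t + 1 by omega)]
    · rw [if_neg h]
      by_cases h3 : u ≤ t
      · rw [if_pos h3, if_pos (by omega)]
        omega
      · rw [if_neg h3, if_neg (by omega)]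
        omega

lemma V_ge {t : ℕ} (h : u ≤ t) : m.V t = l.V (t+1) + 1 := by rw [R.V_all, if_pos h]

lemma Vl_low {t : ℕ} (h : t ≤ u + 1) : l.V t = 0 :=
  V_eq_zero_of_fbar_zero l t (fun r hr => by
    rcases Nat.lt_or_ge r (u+1) with h2 | h2
    · exact (R.hlow r h2).2
    · have : r = u + 1 := by omega
      rw [this]; exact R.hbar)

lemma smallestOverlined : SmallestOverlined m :=
  ⟨u, by rw [R.hfbs]; omega, fun t ht => by
    rw [R.hft (by omega), R.hfbt (by omega)]
    exact R.hlow (t+1) (by omega)⟩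

lemma smallestNonOverlined : SmallestNonOverlined l :=
  ⟨u+1, R.hpos, R.hbar, R.hlow⟩

end ShiftRel

end GHproof
namespace GHproof

namespace ShiftRel

variable {l m : Overpartition} {u : ℕ} (R : ShiftRel l m u)

include R

lemma econd_iff {k : ℕ} (hk : 2 ≤ k) : ECond k 1 l ↔ ECond k (k-1) m := by
  have hu := R.hu
  constructor
  · rintro ⟨hA, hB, hC⟩
    refine ⟨?_, ?_, ?_⟩
    · by_cases h : (1 : ℕ) = u
      · subst h
        rw [R.hfs]
        have := hB 1 (le_refl 1)
        omega
      · rw [R.hft h]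
        have h2 := (R.hlow (1+1) (by omega)).1
        omega
    · intro t ht
      by_cases hts : t = u
      · subst hts
        rw [R.hfs, R.hfbs, R.hft (show t + 1 ≠ t by omega)]
        have h2 := hB (t+1) (by omega)
        rw [R.hbar] at h2
        have := R.hpos
        omega
      · by_cases hts1 : t + 1 = u
        · have h1 := R.hlow (t+1) (by omega)
          rw [R.hft hts, R.hfbt hts, R.hf (t+1), if_pos hts1, h1.1, h1.2]
          have h2 := hB (u+1) (by omega)
          rw [R.hbar] at h2
          omega
        · rw [R.hft hts, R.hfbt hts, R.hft hts1]
          exact hB (t+1) (by omega)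
    · intro t ht hsum
      by_cases hts : t = u
      · subst hts
        rw [R.hfs, R.hfbs, R.hft (show t + 1 ≠ t by omega)] at hsum ⊢
        have hp := R.hpos
        have hsum' : l.f (t+1) + l.fbar (t+1) + l.f (t+1+1) = k - 1 := by
          rw [R.hbar]; omega
        have hC' := hC (t+1) (by omega) hsum'
        rw [R.hbar] at hC'
        have hV0 : l.V (t+1) = 0 := R.Vl_low (le_refl _)
        rw [hV0] at hC'
        rw [R.V_ge (le_refl t), hV0]
        have e1 := mul_pred t (l.f (t+1)) R.hpos
        have e2 := mul_succ_id t (l.f (t+1))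
        have e3 := mul_succ_id (t+1) (l.f (t+1+1))
        unfold Nat.ModEq at hC' ⊢
        set a := t * l.f (t+1) with ha
        set b := (t+1) * l.f (t+1+1) with hb
        set c := t * (l.f (t+1) - 1) with hc
        set d := (t+1) * l.f (t+1) with hd
        set e := (t+1+1) * l.f (t+1+1) with he
        omega
      · by_cases hts1 : t + 1 = u
        · exfalso
          have h1 := R.hlow (t+1) (by omega)
          rw [R.hft hts, R.hfbt hts, R.hf (t+1), if_pos hts1, h1.1, h1.2] at hsum
          have h2 := hB (u+1) (by omega)
          rw [R.hbar] at h2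
          have := R.hpos
          omega
        · by_cases hlt : t < u
          · exfalso
            have h1 := R.hlow (t+1) (by omega)
            have h2 := R.hlow (t+1+1) (by omega)
            rw [R.hft hts, R.hfbt hts, R.hft hts1, h1.1, h1.2, h2.1] at hsum
            omega
          · rw [R.hft hts, R.hfbt hts, R.hft hts1] at hsum ⊢
            have hC' := hC (t+1) (by omega) hsum
            rw [R.V_ge (by omega)]
            have e2 := mul_succ_id t (l.f (t+1))
            have e3 := mul_succ_id t (l.fbar (t+1))
            have e4 := mul_succ_id (t+1) (l.f (t+1+1))
            unfold Nat.ModEq at hC' ⊢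
            set a := t * l.f (t+1) with ha
            set b := t * l.fbar (t+1) with hb
            set c := (t+1) * l.f (t+1+1) with hc
            set d := (t+1) * l.f (t+1) with hd
            set e := (t+1) * l.fbar (t+1) with he
            set f := (t+1+1) * l.f (t+1+1) with hf
            omega
  · rintro ⟨hA, hB, hC⟩
    refine ⟨?_, ?_, ?_⟩
    · have h1 := (R.hlow 1 (by omega)).1
      omega
    · intro t ht
      by_cases hlt : t < u
      · have h1 := R.hlow t (by omega)
        have h2 := R.hlow (t+1) (by omega)
        rw [h1.1, h1.2, h2.1]
        omega
      · by_cases hts : t = u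
        · subst hts
          have h1 := R.hlow t (by omega)
          have hBu := hB t (by omega)
          rw [R.hfs, R.hfbs, R.hft (show t + 1 ≠ t by omega)] at hBu
          have := R.hpos
          rw [h1.1, h1.2]
          omega
        · obtain ⟨r, rfl⟩ : ∃ r, t = r + 1 := ⟨t - 1, by omega⟩
          by_cases hr : r = u
          · subst hr
            have hBu := hB r (by omega)
            rw [R.hfs, R.hfbs, R.hft (show r + 1 ≠ r by omega)] at hBu
            have := R.hpos
            rw [R.hbar]
            omega
          · have hBr := hB r (by omega)
            rw [R.hft hr, R.hfbt hr, R.hft (show r + 1 ≠ u by omega)] at hBr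
            exact hBr
    · intro t ht hsum
      by_cases hlt : t < u
      · exfalso
        have h1 := R.hlow t (by omega)
        have h2 := R.hlow (t+1) (by omega)
        rw [h1.1, h1.2, h2.1] at hsum
        omega
      · by_cases hts : t = u
        · subst hts
          have h1 := R.hlow t (by omega)
          rw [h1.1, h1.2] at hsum ⊢
          have hp := R.hpos
          have hBu := hB t (by omega)
          rw [R.hfs, R.hfbs, R.hft (show t + 1 ≠ t by omega)] at hBu
          have hf2 : l.f (t+1+1) = 0 := by omega
          have hsum' : m.f t + m.fbar t + m.f (t+1) = k - 1 := by
            rw [R.hfs, R.hfbs, R.hft (show t + 1 ≠ t by omega), hf2]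
            omega
          have hC' := hC t (by omega) hsum'
          rw [R.hfs, R.hfbs, R.hft (show t + 1 ≠ t by omega), hf2,
            R.V_ge (le_refl t)] at hC'
          have hV0 : l.V (t+1) = 0 := R.Vl_low (le_refl _)
          have hVu : l.V t = 0 := R.Vl_low (by omega)
          rw [hV0] at hC'
          rw [hVu]
          have e1 := mul_pred t (l.f (t+1)) R.hpos
          have e2 := mul_succ_id t (l.f (t+1))
          unfold Nat.ModEq at hC' ⊢
          set a := t * l.f (t+1) with ha
          set c := t * (l.f (t+1) - 1) with hc
          set d := (t+1) * l.f (t+1) with hd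
          omega
        · obtain ⟨r, rfl⟩ : ∃ r, t = r + 1 := ⟨t - 1, by omega⟩
          by_cases hr : r = u
          · subst hr
            rw [R.hbar] at hsum ⊢
            have hp := R.hpos
            have hsum' : m.f r + m.fbar r + m.f (r+1) = k - 1 := by
              rw [R.hfs, R.hfbs, R.hft (show r + 1 ≠ r by omega)]
              omega
            have hC' := hC r (by omega) hsum'
            rw [R.hfs, R.hfbs, R.hft (show r + 1 ≠ r by omega),
              R.V_ge (le_refl r)] at hC'
            have hV0 : l.V (r+1) = 0 := R.Vl_low (le_refl _)
            rw [hV0] at hC'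
            rw [hV0]
            have e1 := mul_pred r (l.f (r+1)) R.hpos
            have e2 := mul_succ_id r (l.f (r+1))
            have e3 := mul_succ_id (r+1) (l.f (r+1+1))
            unfold Nat.ModEq at hC' ⊢
            set a := r * l.f (r+1) with ha
            set b := (r+1) * l.f (r+1+1) with hb
            set c := r * (l.f (r+1) - 1) with hc
            set d := (r+1) * l.f (r+1) with hd
            set e := (r+1+1) * l.f (r+1+1) with he
            omega
          · have hsum' : m.f r + m.fbar r + m.f (r+1) = k - 1 := by
              rw [R.hft hr, R.hfbt hr, R.hft (show r + 1 ≠ u by omega)]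
              exact hsum
            have hC' := hC r (by omega) hsum'
            rw [R.hft hr, R.hfbt hr, R.hft (show r + 1 ≠ u by omega),
              R.V_ge (by omega)] at hC'
            have e2 := mul_succ_id r (l.f (r+1))
            have e3 := mul_succ_id r (l.fbar (r+1))
            have e4 := mul_succ_id (r+1) (l.f (r+1+1))
            unfold Nat.ModEq at hC' ⊢
            set a := r * l.f (r+1) with ha
            set b := r * l.fbar (r+1) with hb
            set c := (r+1) * l.f (r+1+1) with hc
            set d := (r+1) * l.f (r+1) with hd
            set e := (r+1) * l.fbar (r+1) with he
            set f := (r+1+1) * l.f (r+1+1) with hf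
            omega

end ShiftRel

end GHproof
namespace GHproof

lemma op_ext {a b : Overpartition} (hf : a.f = b.f) (hfb : a.fbar = b.fbar) : a = b := by
  cases a; cases b; simp_all

lemma sNO_unique {l : Overpartition} {s s' : ℕ}
    (h : 0 < l.f s ∧ l.fbar s = 0 ∧ ∀ t < s, l.f t = 0 ∧ l.fbar t = 0)
    (h' : 0 < l.f s' ∧ l.fbar s' = 0 ∧ ∀ t < s', l.f t = 0 ∧ l.fbar t = 0) : s = s' := by
  rcases lt_trichotomy s s' with hlt | he | hgt
  · have := (h'.2.2 s hlt).1; omega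
  · exact he
  · have := (h.2.2 s' hgt).1; omega

lemma sO_unique {l : Overpartition} {s s' : ℕ}
    (h : 0 < l.fbar s ∧ ∀ t < s, l.f t = 0 ∧ l.fbar t = 0)
    (h' : 0 < l.fbar s' ∧ ∀ t < s', l.f t = 0 ∧ l.fbar t = 0) : s = s' := by
  rcases lt_trichotomy s s' with hlt | he | hgt
  · have := (h'.2 s hlt).2; omega
  · exact he
  · have := (h.2 s' hgt).2; omega

lemma add_single_apply (g : ℕ →₀ ℕ) (a b t : ℕ) :
    (g + Finsupp.single a b) t = g t + if a = t then b else 0 := by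
  simp [Finsupp.single_apply]

lemma sub_single_apply (g : ℕ →₀ ℕ) (a b t : ℕ) :
    (g - Finsupp.single a b) t = g t - if a = t then b else 0 := by
  simp [Finsupp.tsub_apply, Finsupp.single_apply]

open scoped Classical in
noncomputable def toggleUp (l : Overpartition) : Overpartition :=
  if h : SmallestNonOverlined l then
    { f := l.f - Finsupp.single h.choose 1,
      fbar := l.fbar + Finsupp.single h.choose 1,
      fbar_le_one := fun t => by
        obtain ⟨h1, h2, h3⟩ := h.choose_spec
        rw [Finsupp.add_apply, Finsupp.single_apply]
        by_cases ht : h.choose = t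
        · rw [if_pos ht, ← ht, h2]
        · rw [if_neg ht]
          have := l.fbar_le_one t
          omega
      f_zero := by
        rw [Finsupp.tsub_apply, l.f_zero]
        omega
      fbar_zero := by
        obtain ⟨h1, h2, h3⟩ := h.choose_spec
        have hne : h.choose ≠ 0 := fun hh => by rw [hh, l.f_zero] at h1; omega
        rw [Finsupp.add_apply, l.fbar_zero, Finsupp.single_apply, if_neg hne]
        rfl }
  else l

lemma toggleUp_rel {l : Overpartition} {s : ℕ}
    (hs : 0 < l.f s ∧ l.fbar s = 0 ∧ ∀ t < s, l.f t = 0 ∧ l.fbar t = 0) :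
    ToggleRel l (toggleUp l) s := by
  have h : SmallestNonOverlined l := ⟨s, hs⟩
  have hse : h.choose = s := sNO_unique h.choose_spec hs
  have hs1 : 1 ≤ s := by
    rcases Nat.eq_zero_or_pos s with rfl | h1
    · rw [l.f_zero] at hs; omega
    · exact h1
  unfold toggleUp
  rw [dif_pos h]
  exact {
    hs1 := hs1
    hlow := hs.2.2
    hbar := hs.2.1
    hpos := hs.1
    hf := fun t => by
      rw [sub_single_apply, hse]
      by_cases ht : t = s
      · rw [if_pos ht, if_pos ht.symm]
        rw [ht]
      · rw [if_neg ht, if_neg (fun hh => ht hh.symm)]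
        omega
    hfb := fun t => by
      rw [add_single_apply, hse]
      by_cases ht : t = s
      · rw [if_pos ht, if_pos ht.symm, ht, hs.2.1]
      · rw [if_neg ht, if_neg (fun hh => ht hh.symm)]
        omega }

open scoped Classical in
noncomputable def toggleDown (m : Overpartition) : Overpartition :=
  if h : SmallestOverlined m then
    { f := m.f + Finsupp.single h.choose 1,
      fbar := m.fbar - Finsupp.single h.choose 1,
      fbar_le_one := fun t => by
        rw [Finsupp.tsub_apply]
        have := m.fbar_le_one t
        omega
      f_zero := by
        obtain ⟨h1, h3⟩ := h.choose_spec
        have hne : h.choose ≠ 0 := fun hh => by rw [hh, m.fbar_zero] at h1; omega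
        rw [Finsupp.add_apply, m.f_zero, Finsupp.single_apply, if_neg hne]
        rfl
      fbar_zero := by
        rw [Finsupp.tsub_apply, m.fbar_zero]
        omega }
  else m

lemma toggleDown_rel {m : Overpartition} {s : ℕ}
    (hs : 0 < m.fbar s ∧ ∀ t < s, m.f t = 0 ∧ m.fbar t = 0) :
    ToggleRel (toggleDown m) m s := by
  have h : SmallestOverlined m := ⟨s, hs⟩
  have hse : h.choose = s := sO_unique h.choose_spec hs
  have hs1 : 1 ≤ s := by
    rcases Nat.eq_zero_or_pos s with rfl | h1
    · rw [m.fbar_zero] at hs; omega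
    · exact h1
  have hbs : m.fbar s = 1 := by
    have := m.fbar_le_one s
    omega
  unfold toggleDown
  rw [dif_pos h]
  exact {
    hs1 := hs1
    hlow := fun t ht => by
      have h2 := hs.2 t ht
      constructor
      · show (m.f + Finsupp.single h.choose 1 : ℕ →₀ ℕ) t = 0
        rw [add_single_apply, hse, if_neg (show ¬ s = t by omega), h2.1]
      · show (m.fbar - Finsupp.single h.choose 1 : ℕ →₀ ℕ) t = 0
        rw [sub_single_apply, hse, if_neg (show ¬ s = t by omega), h2.2]
    hbar := by
      show (m.fbar - Finsupp.single h.choose 1 : ℕ →₀ ℕ) s = 0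
      rw [sub_single_apply, hse, if_pos rfl, hbs]
    hpos := by
      show 1 ≤ (m.f + Finsupp.single h.choose 1 : ℕ →₀ ℕ) s
      rw [add_single_apply, hse, if_pos rfl]
      omega
    hf := fun t => by
      show m.f t = if t = s then (m.f + Finsupp.single h.choose 1 : ℕ →₀ ℕ) s - 1
          else (m.f + Finsupp.single h.choose 1 : ℕ →₀ ℕ) t
      by_cases ht : t = s
      · subst ht
        rw [if_pos rfl, add_single_apply, hse, if_pos rfl]
        omega
      · rw [if_neg ht, add_single_apply, hse, if_neg (fun hh => ht hh.symm)]
        omega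
    hfb := fun t => by
      show m.fbar t = if t = s then 1 else (m.fbar - Finsupp.single h.choose 1 : ℕ →₀ ℕ) t
      by_cases ht : t = s
      · subst ht
        rw [if_pos rfl]
        exact hbs
      · rw [if_neg ht, sub_single_apply, hse, if_neg (fun hh => ht hh.symm)]
        omega }

lemma toggleRel_left_unique {l l' m : Overpartition} {s : ℕ}
    (R : ToggleRel l m s) (R' : ToggleRel l' m s) : l = l' := by
  apply op_ext
  · apply Finsupp.ext
    intro t
    have h1 := R.hf t
    have h2 := R'.hf t
    by_cases ht : t = s
    · subst ht
      rw [if_pos rfl] at h1 h2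
      have := R.hpos
      have := R'.hpos
      omega
    · rw [if_neg ht] at h1 h2
      omega
  · apply Finsupp.ext
    intro t
    by_cases ht : t = s
    · subst ht
      rw [R.hbar, R'.hbar]
    · have h1 := R.hfb t
      have h2 := R'.hfb t
      rw [if_neg ht] at h1 h2
      omega

lemma toggleRel_right_unique {l m m' : Overpartition} {s : ℕ}
    (R : ToggleRel l m s) (R' : ToggleRel l m' s) : m = m' := by
  apply op_ext
  · exact Finsupp.ext fun t => by rw [R.hf t, R'.hf t]
  · exact Finsupp.ext fun t => by rw [R.hfb t, R'.hfb t]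

lemma ToggleRel.ospec {l m : Overpartition} {s : ℕ} (R : ToggleRel l m s) :
    0 < m.fbar s ∧ ∀ t < s, m.f t = 0 ∧ m.fbar t = 0 := by
  refine ⟨by rw [R.hfbs]; omega, fun t ht => ?_⟩
  rw [R.hft (by omega), R.hfbt (by omega)]
  exact R.hlow t ht

lemma ToggleRel.nospec {l m : Overpartition} {s : ℕ} (R : ToggleRel l m s) :
    0 < l.f s ∧ l.fbar s = 0 ∧ ∀ t < s, l.f t = 0 ∧ l.fbar t = 0 :=
  ⟨R.hpos, R.hbar, R.hlow⟩

end GHproof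
namespace GHproof

def P2 (l : Overpartition) : Prop :=
  ∃ s, 2 ≤ s ∧ 0 < l.f s ∧ l.fbar s = 0 ∧ ∀ t < s, l.f t = 0 ∧ l.fbar t = 0

lemma comap_succ_apply (g : ℕ →₀ ℕ) (t : ℕ) :
    Finsupp.comapDomain Nat.succ g (Nat.succ_injective.injOn) t = g (t+1) :=
  Finsupp.comapDomain_apply _ _ _ _

def succEmb : ℕ ↪ ℕ := ⟨Nat.succ, Nat.succ_injective⟩

lemma emb_succ_apply (g : ℕ →₀ ℕ) (t : ℕ) :
    Finsupp.embDomain succEmb g (t+1) = g t :=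
  Finsupp.embDomain_apply_self succEmb g t

lemma emb_zero (g : ℕ →₀ ℕ) : Finsupp.embDomain succEmb g 0 = 0 :=
  Finsupp.embDomain_notin_range _ _ _ (by rintro ⟨a, ha⟩; exact Nat.succ_ne_zero a ha)

open scoped Classical in
noncomputable def shiftDown (l : Overpartition) : Overpartition :=
  if h : P2 l then
    { f := Finsupp.comapDomain Nat.succ l.f (Nat.succ_injective.injOn)
        - Finsupp.single (h.choose - 1) 1,
      fbar := Finsupp.comapDomain Nat.succ l.fbar (Nat.succ_injective.injOn)
        + Finsupp.single (h.choose - 1) 1,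
      fbar_le_one := fun t => by
        obtain ⟨h2, h1, hb, h3⟩ := h.choose_spec
        rw [add_single_apply, comap_succ_apply]
        by_cases ht : h.choose - 1 = t
        · have h4 : t + 1 = h.choose := by omega
          rw [if_pos ht, h4, hb]
        · rw [if_neg ht]
          have := l.fbar_le_one (t+1)
          omega
      f_zero := by
        obtain ⟨h2, h1, hb, h3⟩ := h.choose_spec
        rw [sub_single_apply, comap_succ_apply, (h3 1 (by omega)).1]
        omega
      fbar_zero := by
        obtain ⟨h2, h1, hb, h3⟩ := h.choose_spec
        rw [add_single_apply, comap_succ_apply, (h3 1 (by omega)).2,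
          if_neg (show ¬ h.choose - 1 = 0 by omega)] }
  else l

lemma shiftDown_rel {l : Overpartition} {u : ℕ} (hu : 1 ≤ u)
    (hs : 0 < l.f (u+1) ∧ l.fbar (u+1) = 0 ∧ ∀ t < u+1, l.f t = 0 ∧ l.fbar t = 0) :
    ShiftRel l (shiftDown l) u := by
  have h : P2 l := ⟨u+1, by omega, hs⟩
  have hse : h.choose = u + 1 := by
    obtain ⟨h2, hrest⟩ := h.choose_spec
    exact sNO_unique hrest hs
  have hse1 : h.choose - 1 = u := by omega
  unfold shiftDown
  rw [dif_pos h]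
  exact {
    hu := hu
    hlow := hs.2.2
    hbar := hs.2.1
    hpos := hs.1
    hf := fun t => by
      show (Finsupp.comapDomain Nat.succ l.f (Nat.succ_injective.injOn)
        - Finsupp.single (h.choose - 1) 1 : ℕ →₀ ℕ) t = _
      rw [sub_single_apply, comap_succ_apply, hse1]
      by_cases ht : t = u
      · subst ht
        rw [if_pos rfl, if_pos rfl]
      · rw [if_neg ht, if_neg (fun hh => ht hh.symm)]
        omega
    hfb := fun t => by
      show (Finsupp.comapDomain Nat.succ l.fbar (Nat.succ_injective.injOn)
        + Finsupp.single (h.choose - 1) 1 : ℕ →₀ ℕ) t = _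
      rw [add_single_apply, comap_succ_apply, hse1]
      by_cases ht : t = u
      · subst ht
        rw [if_pos rfl, if_pos rfl, hs.2.1]
      · rw [if_neg ht, if_neg (fun hh => ht hh.symm)]
        omega }

open scoped Classical in
noncomputable def shiftUp (m : Overpartition) : Overpartition :=
  if h : SmallestOverlined m then
    { f := Finsupp.embDomain succEmb m.f + Finsupp.single (h.choose + 1) 1,
      fbar := Finsupp.embDomain succEmb m.fbar - Finsupp.single (h.choose + 1) 1,
      fbar_le_one := fun t => by
        rw [sub_single_apply]
        cases t with
        | zero => rw [emb_zero]; omega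
        | succ r =>
          rw [emb_succ_apply]
          have := m.fbar_le_one r
          omega
      f_zero := by
        rw [add_single_apply, emb_zero, if_neg (show ¬ h.choose + 1 = 0 by omega)]
      fbar_zero := by
        rw [sub_single_apply, emb_zero]
        omega }
  else m

lemma shiftUp_rel {m : Overpartition} {u : ℕ}
    (hs : 0 < m.fbar u ∧ ∀ t < u, m.f t = 0 ∧ m.fbar t = 0) :
    ShiftRel (shiftUp m) m u := by
  have h : SmallestOverlined m := ⟨u, hs⟩
  have hse : h.choose = u := sO_unique h.choose_spec hs
  have hu : 1 ≤ u := by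
    rcases Nat.eq_zero_or_pos u with rfl | h1
    · rw [m.fbar_zero] at hs; omega
    · exact h1
  have hbu : m.fbar u = 1 := by
    have := m.fbar_le_one u
    omega
  unfold shiftUp
  rw [dif_pos h]
  exact {
    hu := hu
    hlow := fun t ht => by
      constructor
      · show (Finsupp.embDomain succEmb m.f + Finsupp.single (h.choose + 1) 1 : ℕ →₀ ℕ) t = 0
        rw [add_single_apply, hse]
        cases t with
        | zero => rw [emb_zero, if_neg (by omega)]
        | succ r =>
          rw [emb_succ_apply, if_neg (by omega), (hs.2 r (by omega)).1]
      · show (Finsupp.embDomain succEmb m.fbar - Finsupp.single (h.choose + 1) 1 : ℕ →₀ ℕ) t = 0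
        rw [sub_single_apply, hse]
        cases t with
        | zero => rw [emb_zero]; omega
        | succ r =>
          rw [emb_succ_apply, (hs.2 r (by omega)).2]
          omega
    hbar := by
      show (Finsupp.embDomain succEmb m.fbar - Finsupp.single (h.choose + 1) 1 : ℕ →₀ ℕ) (u+1) = 0
      rw [sub_single_apply, hse, emb_succ_apply, if_pos rfl, hbu]
    hpos := by
      show 1 ≤ (Finsupp.embDomain succEmb m.f + Finsupp.single (h.choose + 1) 1 : ℕ →₀ ℕ) (u+1)
      rw [add_single_apply, hse, emb_succ_apply, if_pos rfl]
      omega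
    hf := fun t => by
      show m.f t = if t = u
        then (Finsupp.embDomain succEmb m.f + Finsupp.single (h.choose + 1) 1 : ℕ →₀ ℕ) (u+1) - 1
        else (Finsupp.embDomain succEmb m.f + Finsupp.single (h.choose + 1) 1 : ℕ →₀ ℕ) (t+1)
      by_cases ht : t = u
      · subst ht
        rw [if_pos rfl, add_single_apply, hse, emb_succ_apply, if_pos rfl]
        omega
      · rw [if_neg ht, add_single_apply, hse, emb_succ_apply,
          if_neg (show ¬ u + 1 = t + 1 by omega)]
        omega
    hfb := fun t => by
      show m.fbar t = if t = u
        then 1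
        else (Finsupp.embDomain succEmb m.fbar - Finsupp.single (h.choose + 1) 1 : ℕ →₀ ℕ) (t+1)
      by_cases ht : t = u
      · subst ht
        rw [if_pos rfl]
        exact hbu
      · rw [if_neg ht, sub_single_apply, hse, emb_succ_apply,
          if_neg (show ¬ u + 1 = t + 1 by omega)]
        omega }

lemma shiftRel_left_unique {l l' m : Overpartition} {u : ℕ}
    (R : ShiftRel l m u) (R' : ShiftRel l' m u) : l = l' := by
  apply op_ext
  · apply Finsupp.ext
    intro t
    cases t with
    | zero => rw [l.f_zero, l'.f_zero]
    | succ r =>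
      have h1 := R.hf r
      have h2 := R'.hf r
      by_cases hr : r = u
      · subst hr
        rw [if_pos rfl] at h1 h2
        have := R.hpos
        have := R'.hpos
        omega
      · rw [if_neg hr] at h1 h2
        omega
  · apply Finsupp.ext
    intro t
    cases t with
    | zero => rw [l.fbar_zero, l'.fbar_zero]
    | succ r =>
      by_cases hr : r = u
      · subst hr
        rw [R.hbar, R'.hbar]
      · have h1 := R.hfb r
        have h2 := R'.hfb r
        rw [if_neg hr] at h1 h2
        omega

lemma shiftRel_right_unique {l m m' : Overpartition} {u : ℕ}
    (R : ShiftRel l m u) (R' : ShiftRel l m' u) : m = m' := by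
  apply op_ext
  · exact Finsupp.ext fun t => by rw [R.hf t, R'.hf t]
  · exact Finsupp.ext fun t => by rw [R.hfb t, R'.hfb t]

lemma ShiftRel.ospec {l m : Overpartition} {u : ℕ} (R : ShiftRel l m u) :
    0 < m.fbar u ∧ ∀ t < u, m.f t = 0 ∧ m.fbar t = 0 := by
  refine ⟨by rw [R.hfbs]; omega, fun t ht => ?_⟩
  rw [R.hft (by omega), R.hfbt (by omega)]
  exact R.hlow (t+1) (by omega)

lemma ShiftRel.nospec {l m : Overpartition} {u : ℕ} (R : ShiftRel l m u) :
    0 < l.f (u+1) ∧ l.fbar (u+1) = 0 ∧ ∀ t < u + 1, l.f t = 0 ∧ l.fbar t = 0 :=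
  ⟨R.hpos, R.hbar, R.hlow⟩

end GHproof

namespace GHproof

lemma mem_GSetN {k i : ℕ} {N : ℕ → ℕ} {l : Overpartition} :
    l ∈ GSetN k i N ↔ (ECond k i l ∧ (∀ r, 1 ≤ r → r ≤ k-1 → gordonN l r = N r) ∧
      l.parts = ∑ j ∈ Finset.Icc 1 (k-1), N j) ∧ SmallestNonOverlined l := by
  simp [GSetN, ESetN, Set.mem_sep_iff, Set.mem_setOf_eq, and_assoc]

lemma mem_HSetN {k i : ℕ} {N : ℕ → ℕ} {l : Overpartition} :
    l ∈ HSetN k i N ↔ (ECond k i l ∧ (∀ r, 1 ≤ r → r ≤ k-1 → gordonN l r = N r) ∧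
      l.parts = ∑ j ∈ Finset.Icc 1 (k-1), N j) ∧ SmallestOverlined l := by
  simp [HSetN, ESetN, Set.mem_sep_iff, Set.mem_setOf_eq, and_assoc]

end GHproof

open GHproof

/-- `G̃_{N₁,…,N_{k-1};i}(n) = H̃_{N₁,…,N_{k-1};i-1}(n)` for `k > i ≥ 2`,
and `G̃_{N₁,…,N_{k-1};1}(n) = H̃_{N₁,…,N_{k-1};k-1}(n - N₁ - ⋯ - N_{k-1})` (Lemma 3.2). -/
theorem G_eq_H_marked
    (k : ℕ) (N : ℕ → ℕ) (hmono : ∀ j, 1 ≤ j → j + 2 ≤ k → N (j+1) ≤ N j) (n : ℕ) :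
    (∀ i, 2 ≤ i → i < k →
      {l : Overpartition | l.wt = n ∧ l ∈ GSetN k i N}.ncard
        = {l : Overpartition | l.wt = n ∧ l ∈ HSetN k (i-1) N}.ncard) ∧
    (1 < k →
      {l : Overpartition | l.wt = n ∧ l ∈ GSetN k 1 N}.ncard
        = {l : Overpartition |
            l.wt = n - ∑ j ∈ Finset.Icc 1 (k-1), N j ∧ l ∈ HSetN k (k-1) N}.ncard) := by
  constructor
  · intro i hi hik
    have himg : {l : Overpartition | l.wt = n ∧ l ∈ HSetN k (i-1) N}
        = toggleUp '' {l : Overpartition | l.wt = n ∧ l ∈ GSetN k i N} := by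
      ext μ
      simp only [Set.mem_setOf_eq, Set.mem_image]
      constructor
      · rintro ⟨hwt, hmem⟩
        obtain ⟨⟨hE, hNr, hp⟩, hSO⟩ := mem_HSetN.1 hmem
        obtain ⟨s, hs⟩ := hSO
        have R := toggleDown_rel hs
        refine ⟨toggleDown μ, ⟨?_, ?_⟩, ?_⟩
        · rw [← R.wt_eq]; exact hwt
        · refine mem_GSetN.2 ⟨⟨(R.econd_iff hi hik).2 hE, fun r h1 h2 => ?_, ?_⟩,
            R.smallestNonOverlined⟩
          · rw [← R.gordonN_eq r]; exact hNr r h1 h2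
          · rw [← R.parts_eq]; exact hp
        · exact toggleRel_right_unique (toggleUp_rel R.nospec) R
      · rintro ⟨l, ⟨hwt, hmem⟩, rfl⟩
        obtain ⟨⟨hE, hNr, hp⟩, hSNO⟩ := mem_GSetN.1 hmem
        obtain ⟨s, hs⟩ := hSNO
        have R := toggleUp_rel hs
        refine ⟨R.wt_eq.trans hwt, mem_HSetN.2 ⟨⟨(R.econd_iff hi hik).1 hE,
          fun r h1 h2 => (R.gordonN_eq r).trans (hNr r h1 h2),
          R.parts_eq.trans hp⟩, R.smallestOverlined⟩⟩
    rw [himg]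
    symm
    apply Set.ncard_image_of_injOn
    intro l1 h1 l2 h2 heq
    obtain ⟨⟨_, hSNO1⟩, ⟨_, hSNO2⟩⟩ : (_ ∧ SmallestNonOverlined l1) ∧ (_ ∧ SmallestNonOverlined l2) :=
      ⟨mem_GSetN.1 h1.2, mem_GSetN.1 h2.2⟩
    obtain ⟨s1, hs1⟩ := hSNO1
    obtain ⟨s2, hs2⟩ := hSNO2
    have R1 := toggleUp_rel hs1
    have R2 := toggleUp_rel hs2
    rw [← heq] at R2
    have hss : s1 = s2 := sO_unique R1.ospec R2.ospec
    subst hss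
    exact toggleRel_left_unique R1 R2
  · intro hk
    set M := ∑ j ∈ Finset.Icc 1 (k-1), N j with hM
    have himg : {l : Overpartition | l.wt = n - M ∧ l ∈ HSetN k (k-1) N}
        = shiftDown '' {l : Overpartition | l.wt = n ∧ l ∈ GSetN k 1 N} := by
      ext μ
      simp only [Set.mem_setOf_eq, Set.mem_image]
      constructor
      · rintro ⟨hwt, hmem⟩
        obtain ⟨⟨hE, hNr, hp⟩, hSO⟩ := mem_HSetN.1 hmem
        obtain ⟨s, hs⟩ := hSO
        have R := shiftUp_rel hs
        have hMpos : 1 ≤ M := by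
          rw [hM, ← hp]
          exact parts_pos μ (x := s) (by omega)
        have hwtp : μ.parts ≤ μ.wt := parts_le_wt μ
        have hn : M + 1 ≤ n := by
          rw [hp] at hwtp
          omega
        refine ⟨shiftUp μ, ⟨?_, ?_⟩, ?_⟩
        · have hw := R.wt_eq
          have hpl : (shiftUp μ).parts = M := by rw [hM, ← R.parts_eq]; exact hp
          rw [hpl, hwt] at hw
          omega
        · refine mem_GSetN.2 ⟨⟨(R.econd_iff (by omega)).2 hE, fun r h1 h2 => ?_, ?_⟩,
            R.smallestNonOverlined⟩
          · rw [← R.gordonN_eq r]; exact hNr r h1 h2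
          · rw [← R.parts_eq]; exact hp
        · exact shiftRel_right_unique (shiftDown_rel R.hu R.nospec) R
      · rintro ⟨l, ⟨hwt, hmem⟩, rfl⟩
        obtain ⟨⟨hE, hNr, hp⟩, hSNO⟩ := mem_GSetN.1 hmem
        obtain ⟨s, hs⟩ := hSNO
        have hf1 : l.f 1 = 0 := by
          have := hE.1
          omega
        have hs2 : 2 ≤ s := by
          rcases Nat.eq_zero_or_pos s with rfl | h1
          · rw [l.f_zero] at hs; omega
          · rcases Nat.eq_or_lt_of_le h1 with h2 | h2
            · rw [← h2, hf1] at hs; omega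
            · omega
        have hsu : s - 1 + 1 = s := by omega
        have R : ShiftRel l (shiftDown l) (s - 1) := shiftDown_rel (by omega)
          ⟨by rw [hsu]; exact hs.1, by rw [hsu]; exact hs.2.1,
            fun t ht => hs.2.2 t (by omega)⟩
        refine ⟨?_, mem_HSetN.2 ⟨⟨(R.econd_iff (by omega)).1 hE,
          fun r h1 h2 => (R.gordonN_eq r).trans (hNr r h1 h2),
          R.parts_eq.trans hp⟩, R.smallestOverlined⟩⟩
        have hw := R.wt_eq
        rw [hp, hwt] at hw
        omega
    rw [himg]
    symm
    apply Set.ncard_image_of_injOn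
    intro l1 h1 l2 h2 heq
    obtain ⟨_, hSNO1⟩ := mem_GSetN.1 h1.2
    obtain ⟨_, hSNO2⟩ := mem_GSetN.1 h2.2
    have hf11 : l1.f 1 = 0 := by have := (mem_GSetN.1 h1.2).1.1.1; omega
    have hf12 : l2.f 1 = 0 := by have := (mem_GSetN.1 h2.2).1.1.1; omega
    obtain ⟨s1, hs1⟩ := hSNO1
    obtain ⟨s2, hs2⟩ := hSNO2
    have hs21 : 2 ≤ s1 := by
      rcases Nat.eq_zero_or_pos s1 with rfl | hp1
      · rw [l1.f_zero] at hs1; omega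
      · rcases Nat.eq_or_lt_of_le hp1 with h2 | h2
        · rw [← h2, hf11] at hs1; omega
        · omega
    have hs22 : 2 ≤ s2 := by
      rcases Nat.eq_zero_or_pos s2 with rfl | hp2
      · rw [l2.f_zero] at hs2; omega
      · rcases Nat.eq_or_lt_of_le hp2 with h2 | h2
        · rw [← h2, hf12] at hs2; omega
        · omega
    have hsu1 : s1 - 1 + 1 = s1 := by omega
    have hsu2 : s2 - 1 + 1 = s2 := by omega
    have R1 : ShiftRel l1 (shiftDown l1) (s1 - 1) := shiftDown_rel (by omega)
      ⟨by rw [hsu1]; exact hs1.1, by rw [hsu1]; exact hs1.2.1,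
        fun t ht => hs1.2.2 t (by omega)⟩
    have R2 : ShiftRel l2 (shiftDown l2) (s2 - 1) := shiftDown_rel (by omega)
      ⟨by rw [hsu2]; exact hs2.1, by rw [hsu2]; exact hs2.2.1,
        fun t ht => hs2.2.2 t (by omega)⟩
    rw [← heq] at R2
    have hss : s1 - 1 = s2 - 1 := sO_unique R1.ospec R2.ospec
    rw [← hss] at R2
    exact shiftRel_left_unique R1 R2
end

section
/- Let λ be an overpartition whose Göllnitz–Gordon marking is decomposed into clusters GG(λ) = {α^{(N₁)}, α^{(N₁−1)}, …, α^{(1)}}. Then for each 1 ≤ t ≤ N₁, the cluster α^{(t)} contains at most one odd part; moreover, if α^{(t)} contains an odd part α_d^{(t)}, then |α_d^{(t)}| − |α_1^{(t)}| ≤ 1. -/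
open scoped BigOperators

section Aux

lemma mex1_spec (S : Finset ℕ) :
    1 ≤ mex1 S ∧ mex1 S ∉ S ∧ ∀ r, 1 ≤ r → r < mex1 S → r ∈ S := by
  classical
  have hmem : S.sup id + 1 ∈ (List.range (S.sup id + 2)).filter
      (fun r => decide (1 ≤ r ∧ r ∉ S)) := by
    rw [List.mem_filter]
    refine ⟨List.mem_range.2 (by omega), ?_⟩
    simp only [decide_eq_true_eq]
    refine ⟨by omega, fun hs => ?_⟩
    have h2 := Finset.le_sup (f := id) hs
    simp only [id_eq] at h2
    omega
  have hne : (List.range (S.sup id + 2)).filter (fun r => decide (1 ≤ r ∧ r ∉ S)) ≠ [] :=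
    List.ne_nil_of_mem hmem
  have hsort : ((List.range (S.sup id + 2)).filter
      (fun r => decide (1 ≤ r ∧ r ∉ S))).Pairwise (· < ·) :=
    List.pairwise_lt_range.filter _
  obtain ⟨a, tl, hLa⟩ := List.exists_cons_of_ne_nil hne
  have hma : mex1 S = a := by rw [mex1, hLa]; rfl
  have hmin : ∀ b ∈ (List.range (S.sup id + 2)).filter (fun r => decide (1 ≤ r ∧ r ∉ S)),
      a ≤ b := by
    intro b hb
    rw [hLa] at hb hsort
    rcases List.mem_cons.1 hb with rfl | hb
    · exact le_rfl
    · exact (List.rel_of_pairwise_cons hsort hb).le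
  have haP : 1 ≤ a ∧ a ∉ S := by
    have : a ∈ (List.range (S.sup id + 2)).filter (fun r => decide (1 ≤ r ∧ r ∉ S)) := by
      rw [hLa]; exact List.mem_cons_self
    have := (List.mem_filter.1 this).2
    simpa using this
  refine ⟨hma ▸ haP.1, hma ▸ haP.2, ?_⟩
  intro r hr1 hr2
  by_contra hrS
  rw [hma] at hr2
  have hasup : a ≤ S.sup id + 1 := hmin _ hmem
  have hrL : r ∈ (List.range (S.sup id + 2)).filter (fun r => decide (1 ≤ r ∧ r ∉ S)) := by
    rw [List.mem_filter]
    exact ⟨List.mem_range.2 (by omega), by simp [hr1, hrS]⟩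
  have := hmin _ hrL
  omega

lemma mem_marksWhere {acc : List (OPart × ℕ)} {test : OPart → Bool} {r : ℕ} :
    r ∈ marksWhere acc test ↔ ∃ q, q ∈ acc ∧ test q.1 = true ∧ q.2 = r := by
  simp only [marksWhere, List.mem_toFinset, List.mem_map, List.mem_filter]
  constructor
  · rintro ⟨q, ⟨h1, h2⟩, h3⟩; exact ⟨q, h1, h2, h3⟩
  · rintro ⟨q, h1, h2, h3⟩; exact ⟨q, ⟨h1, h2⟩, h3⟩

lemma markFold_cons (f : List (OPart × ℕ) → OPart → ℕ) (p : OPart) (L : List OPart)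
    (acc : List (OPart × ℕ)) :
    markFold f (p :: L) acc = markFold f L (acc ++ [(p, f acc p)]) := rfl

lemma markFold_shape (f : List (OPart × ℕ) → OPart → ℕ) (L : List OPart) :
    ∀ acc, ∃ R, markFold f L acc = acc ++ R ∧ R.map Prod.fst = L := by
  induction L with
  | nil => intro acc; exact ⟨[], by simp [markFold]⟩
  | cons p L ih =>
    intro acc
    obtain ⟨R, h1, h2⟩ := ih (acc ++ [(p, f acc p)])
    exact ⟨(p, f acc p) :: R, by simp [markFold_cons, h1], by simp [h2]⟩

lemma markFold_fst (f : List (OPart × ℕ) → OPart → ℕ) (L : List OPart)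
    (acc : List (OPart × ℕ)) :
    (markFold f L acc).map Prod.fst = acc.map Prod.fst ++ L := by
  obtain ⟨R, h1, h2⟩ := markFold_shape f L acc
  rw [h1]; simp [h2]

lemma markFold_mem_split (f : List (OPart × ℕ) → OPart → ℕ) (L : List OPart) :
    ∀ acc z, z ∈ markFold f L acc →
      z ∈ acc ∨ ∃ A R, markFold f L acc = A ++ z :: R ∧ z.2 = f A z.1 := by
  induction L with
  | nil => intro acc z hz; exact Or.inl hz
  | cons p L ih =>
    intro acc z hz
    rw [markFold_cons] at hz
    rcases ih _ z hz with hz' | ⟨A, R, h1, h2⟩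
    · rcases List.mem_append.1 hz' with hl | hl
      · exact Or.inl hl
      · have hzp : z = (p, f acc p) := by simpa using hl
        obtain ⟨R, hR, -⟩ := markFold_shape f L (acc ++ [(p, f acc p)])
        right
        refine ⟨acc, R, ?_, by rw [hzp]⟩
        rw [markFold_cons, hR, hzp]
        simp
    · right
      rw [markFold_cons]
      exact ⟨A, R, h1, h2⟩

end Aux
section Aux2

lemma partsListUpTo_size {l : Overpartition} {B : ℕ} {x : OPart}
    (hx : x ∈ partsListUpTo l B) : 1 ≤ x.1 ∧ x.1 ≤ B := by
  rw [partsListUpTo, List.mem_flatMap] at hx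
  obtain ⟨t, ht, hx⟩ := hx
  rw [List.mem_range] at ht
  have hx1 : x.1 = t + 1 := by
    rcases List.mem_append.1 hx with hl | hl
    · split at hl
      · simp at hl; rw [hl]
      · simp at hl
    · rw [List.eq_of_mem_replicate hl]
  omega

lemma partsListUpTo_sorted (l : Overpartition) (B : ℕ) :
    (partsListUpTo l B).Pairwise (fun a b : OPart => a.1 ≤ b.1) := by
  induction B with
  | zero => simp [partsListUpTo]
  | succ B ih =>
    have hsplit : partsListUpTo l (B+1) = partsListUpTo l B ++
        ((if l.fbar (B+1) = 1 then [((B+1 : ℕ), true)] else []) ++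
          List.replicate (l.f (B+1)) ((B+1 : ℕ), false)) := by
      rw [partsListUpTo, List.range_succ, List.flatMap_append, partsListUpTo]
      simp
    rw [hsplit, List.pairwise_append]
    have hblk : ∀ x : OPart, x ∈ ((if l.fbar (B+1) = 1 then [((B+1 : ℕ), true)] else []) ++
        List.replicate (l.f (B+1)) ((B+1 : ℕ), false)) → x.1 = B + 1 := by
      intro x hx
      rcases List.mem_append.1 hx with hl | hl
      · split at hl
        · simp at hl; rw [hl]
        · simp at hl
      · rw [List.eq_of_mem_replicate hl]
    refine ⟨ih, ?_, ?_⟩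
    · rw [List.pairwise_iff_getElem]
      intro i j hi hj hij
      rw [hblk _ (List.getElem_mem hi), hblk _ (List.getElem_mem hj)]
    · intro a ha b hb
      have := (partsListUpTo_size ha).2
      rw [hblk b hb]
      omega

lemma ggMarked_fst (l : Overpartition) : (ggMarked l).map Prod.fst = partsList l := by
  have := markFold_fst (ggMarkOf l) (partsList l) []
  simpa [ggMarked] using this

lemma ggMarked_sorted (l : Overpartition) :
    (ggMarked l).Pairwise (fun a b : OPart × ℕ => a.1.1 ≤ b.1.1) := by
  have h := partsListUpTo_sorted l (obound l)
  rw [← partsList, ← ggMarked_fst, List.pairwise_map] at h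
  exact h

lemma ggMarked_split {l : Overpartition} {z : OPart × ℕ} (hz : z ∈ ggMarked l) :
    ∃ A R, ggMarked l = A ++ z :: R ∧ z.2 = ggMarkOf l A z.1 ∧
      ∀ w ∈ R, z.1.1 ≤ w.1.1 := by
  rcases markFold_mem_split (ggMarkOf l) (partsList l) [] z hz with hl | ⟨A, R, h1, h2⟩
  · simp at hl
  refine ⟨A, R, h1, h2, ?_⟩
  have hsort := ggMarked_sorted l
  rw [show ggMarked l = markFold (ggMarkOf l) (partsList l) [] from rfl, h1,
    List.pairwise_append] at hsort
  intro w hw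
  exact (List.rel_of_pairwise_cons hsort.2.1 hw)

end Aux2
section Aux3

lemma odd_mark_ge_two {l : Overpartition} {s m : ℕ} {ov : Bool}
    (hmem : ((s, ov), m) ∈ ggMarked l) (hs : s % 2 = 1) (hm : 2 ≤ m) :
    ov = true ∧ ∀ r, 1 ≤ r → r < m → ∃ ov₂, ((s - 1, ov₂), r) ∈ ggMarked l := by
  obtain ⟨A, R, hsplit, hmark, -⟩ := ggMarked_split hmem
  cases ov with
  | false => simp [ggMarkOf, hs] at hmark; omega
  | true =>
    simp only [ggMarkOf, hs] at hmark
    norm_num at hmark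
    -- hmark : m = mex1 (marksWhere A fun q => decide (q.1 = s - 1))
    refine ⟨rfl, ?_⟩
    intro r hr1 hr2
    have hrS := (mex1_spec (marksWhere A fun q => decide (q.1 = s - 1))).2.2 r hr1
      (by rw [← hmark]; exact hr2)
    rw [mem_marksWhere] at hrS
    obtain ⟨q, hqA, hqt, hqr⟩ := hrS
    simp only [decide_eq_true_eq] at hqt
    refine ⟨q.1.2, ?_⟩
    have hq : ((s - 1, q.1.2), r) = q := by
      rw [← hqr, ← hqt]
    rw [hq, hsplit]
    exact List.mem_append_left _ hqA

end Aux3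
section Aux4

lemma no_reuse_above_overlined {l : Overpartition} {s m m' : ℕ} {ov' : Bool}
    (h1 : ((s, true), m) ∈ ggMarked l) (hs : s % 2 = 1) (hm : 2 ≤ m)
    (h2 : ((s + 1, ov'), m') ∈ ggMarked l) : m' ≠ m := by
  obtain ⟨-, hmarks⟩ := odd_mark_ge_two h1 hs hm
  obtain ⟨ov₁, hone⟩ := hmarks 1 le_rfl (by omega)
  have hpar : (s + 1) % 2 = 0 := by omega
  cases ov' with
  | true =>
    obtain ⟨A, R, hsplit, hmark, -⟩ := ggMarked_split h2
    rw [ggMarkOf, if_neg (by simp [hpar]), if_pos (by simp [hpar])] at hmark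
    omega
  | false =>
    obtain ⟨A, R, hsplit, hmark, hR⟩ := ggMarked_split h2
    have hsub : ∀ w : OPart × ℕ, w ∈ ggMarked l → w.1.1 < s + 1 → w ∈ A := by
      intro w hw hlt
      rw [hsplit] at hw
      rcases List.mem_append.1 hw with hl | hl
      · exact hl
      · rcases List.mem_cons.1 hl with rfl | hl
        · simp at hlt
        · have hge : s + 1 ≤ w.1.1 := hR w hl
          omega
    have hA1 : ((s - 1, ov₁), 1) ∈ A := hsub _ hone (by simp only; omega)
    have hAm : ((s, true), m) ∈ A := hsub _ h1 (by simp only; omega)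
    rw [ggMarkOf, if_neg (by simp [hpar]), if_neg (by simp [hpar]),
      if_neg (by simp [hpar])] at hmark
    simp only at hmark
    have hl1 : (1 : ℕ) ∈ marksWhere A
        (fun q => decide (q.1 = (s + 1, false).1 - 2 ∨ q.1 = (s + 1, false).1 - 1 ∧ q.2 = true)) := by
      rw [mem_marksWhere]
      refine ⟨((s - 1, ov₁), 1), hA1, ?_, rfl⟩
      rw [decide_eq_true_eq]
      left
      simp only
      omega
    have hlm : m ∈ marksWhere A
        (fun q => decide (q.1 = (s + 1, false).1 - 2 ∨ q.1 = (s + 1, false).1 - 1 ∧ q.2 = true)) := by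
      rw [mem_marksWhere]
      refine ⟨((s, true), m), hAm, ?_, rfl⟩
      rw [decide_eq_true_eq]
      right
      exact ⟨by simp only; omega, rfl⟩
    rw [if_pos (Or.inl hl1)] at hmark
    intro hmm
    have hnot := (mex1_spec ((marksWhere A fun q => decide (q.1 = (s + 1, false).1)) ∪
      marksWhere A
        (fun q => decide (q.1 = (s + 1, false).1 - 2 ∨ q.1 = (s + 1, false).1 - 1 ∧ q.2 = true)))).2.1
    rw [← hmark] at hnot
    exact hnot (Finset.mem_union_right _ (hmm ▸ hlm))

end Aux4
section Aux5

lemma oneMarkedDesc_anti (l : Overpartition) :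
    (oneMarkedDesc l).Pairwise (fun a b : OPart => b.1 ≤ a.1) := by
  rw [oneMarkedDesc, List.pairwise_reverse, List.pairwise_map]
  exact List.Pairwise.sublist List.filter_sublist (ggMarked_sorted l)

lemma head_odd_contra (l : Overpartition) (α : ℕ → List OPart) (h : IsClusterDecomp l α)
    (t : ℕ) (ht1 : 1 ≤ t) (ht : t ≤ ggN l 1)
    (y : OPart) (hy : (α t)[0]? = some y) (hodd : y.1 % 2 = 1) (hlen : 2 ≤ (α t).length)
    (q : OPart × ℕ) (hq : q ∈ ggMarked l) (hq2 : q.2 = 1) (hq1 : q.1.1 = y.1 + 1) : False := by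
  have hhead : (oneMarkedDesc l)[t-1]? = some y := by
    rw [← h.2.1 t ht1 ht, List.head?_eq_getElem?, hy]
  have hq_one : q.1 ∈ oneMarkedDesc l := by
    rw [oneMarkedDesc, List.mem_reverse, List.mem_map]
    exact ⟨q, List.mem_filter.2 ⟨hq, by simp [hq2]⟩, rfl⟩
  obtain ⟨e, he, heq⟩ := List.mem_iff_getElem.1 hq_one
  have hanti := List.pairwise_iff_getElem.1 (oneMarkedDesc_anti l)
  obtain ⟨ht1', hty⟩ := List.getElem?_eq_some_iff.1 hhead
  have het : e < t - 1 := by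
    by_contra hc
    push_neg at hc
    rcases Nat.eq_or_lt_of_le hc with rfl | hlt
    · rw [hty] at heq; rw [heq] at hq1; omega
    · have := hanti _ _ ht1' he hlt
      rw [hty, heq] at this
      omega
  have ht2' : t - 2 < (oneMarkedDesc l).length := by omega
  have hup : (oneMarkedDesc l)[t-2].1 ≤ y.1 + 1 := by
    rcases Nat.eq_or_lt_of_le (show e ≤ t - 2 by omega) with rfl | hlt
    · rw [heq, hq1]
    · have := hanti _ _ he ht2' hlt
      rw [heq] at this; omega
  have hdown : y.1 ≤ (oneMarkedDesc l)[t-2].1 := by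
    have := hanti _ _ ht2' ht1' (by omega)
    rw [hty] at this; omega
  have hforced : ForcedSingleton (oneMarkedDesc l) t := by
    refine ⟨by omega, y, (oneMarkedDesc l)[t-2], hhead, List.getElem?_eq_getElem ht2', ?_⟩
    rcases Nat.eq_or_lt_of_le hdown with heqv | hlt
    · exact Or.inl heqv
    · exact Or.inr ⟨hodd, by omega⟩
  have := h.2.2.2.1 t hforced
  omega

end Aux5
/-- Proposition 5.3: each cluster of the Göllnitz–Gordon marking of an
overpartition contains at most one odd part, and if the cluster `α^{(t)}` contains an
odd part `α_d^{(t)}`, then `|α_d^{(t)}| - |α_1^{(t)}| ≤ 1`. -/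
theorem cluster_at_most_one_odd
    (l : Overpartition) (α : ℕ → List OPart) (h : IsClusterDecomp l α)
    (t : ℕ) (ht1 : 1 ≤ t) (ht : t ≤ ggN l 1) :
    (∀ (b c : ℕ) (x y : OPart), (α t)[b]? = some x → (α t)[c]? = some y →
      x.1 % 2 = 1 → y.1 % 2 = 1 → b = c) ∧
    (∀ (d : ℕ) (x h0 : OPart), (α t)[d]? = some x → (α t)[0]? = some h0 →
      x.1 % 2 = 1 → x.1 ≤ h0.1 + 1) := by
  classical
  have hchain := h.2.2.2.2.1
  have hmem : ∀ b x, (α t)[b]? = some x → (x, b+1) ∈ ggMarked l := by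
    intro b x hbx
    have h1 : (x, b+1) ∈ clusterMS (α t) := by
      rw [clusterMS]
      simp only [Multiset.mem_coe, List.mem_map]
      exact ⟨(x, b), List.mk_mem_zipIdx_iff_getElem?.2 hbx, rfl⟩
    have h2 : clusterMS (α t) ≤ ∑ j ∈ Finset.Icc 1 (ggN l 1), clusterMS (α j) :=
      Finset.single_le_sum (f := fun j => clusterMS (α j))
        (fun i _ => zero_le) (Finset.mem_Icc.2 ⟨ht1, ht⟩)
    rw [← h.2.2.1] at h2
    have h3 := Multiset.mem_of_le h2 h1
    simpa using h3
  have key : ∀ n b d x y, (α t)[d]? = some x → x.1 % 2 = 1 → d = b + n + 1 →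
      (α t)[b]? = some y → y.1 + 1 = x.1 := by
    intro n
    induction n with
    | zero =>
      intro b d x y hdx hxodd hd hby
      subst hd
      have hcs := hchain t b y x hby hdx
      by_cases hy : y.1 % 2 = 1
      · have := hcs.1 hy; omega
      · have h2 := hcs.2 (by omega)
        by_cases hEx : ExistsMarkedAt (ggMarked l) (y.1 + 2) (b + 1)
        · have := h2.2 hEx; omega
        · have := h2.1 hEx; omega
    | succ n ih =>
      intro b d x y hdx hxodd hd hby
      have hsmark : ∀ r, 1 ≤ r → r ≤ d → ∃ ov₂, ((x.1 - 1, ov₂), r) ∈ ggMarked l := by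
        intro r hr1 hr2
        exact (odd_mark_ge_two (s := x.1) (ov := x.2) (m := d+1)
          (by simpa using hmem d x hdx) hxodd (by omega)).2 r hr1 (by omega)
      obtain ⟨hdlen, -⟩ := List.getElem?_eq_some_iff.1 hdx
      have hblt : b + 1 < (α t).length := by omega
      obtain ⟨z, hz⟩ : ∃ z, (α t)[b+1]? = some z := ⟨_, List.getElem?_eq_getElem hblt⟩
      have hz1 : z.1 + 1 = x.1 := ih (b+1) d x z hdx hxodd (by omega) hz
      have hcs := hchain t b y z hby hz
      by_cases hy : y.1 % 2 = 1
      · have hyz : z.1 = y.1 + 1 := hcs.1 hy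
        have hymem := hmem b y hby
        rcases Nat.eq_zero_or_pos b with rfl | hb
        · obtain ⟨ov₂, hpart⟩ := hsmark 1 le_rfl (by omega)
          exact (head_odd_contra l α h t ht1 ht y hby hy (by omega)
            ((x.1 - 1, ov₂), 1) hpart rfl (by simp only; omega)).elim
        · have hM := odd_mark_ge_two (s := y.1) (ov := y.2) (m := b+1)
            (by simpa using hymem) hy (by omega)
          have hov : y.2 = true := hM.1
          obtain ⟨ov₂, hpart⟩ := hsmark (b+1) (by omega) (by omega)
          have hpart' : ((y.1 + 1, ov₂), b + 1) ∈ ggMarked l := by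
            have hxy : x.1 - 1 = y.1 + 1 := by omega
            rw [← hxy]
            exact hpart
          exact absurd rfl (no_reuse_above_overlined (s := y.1) (m := b+1) (m' := b+1)
            (ov' := ov₂) (by rw [← hov]; simpa using hymem) hy (by omega) hpart')
      · have h2 := hcs.2 (by omega)
        by_cases hyz : y.1 = z.1
        · omega
        · have hzpar : z.1 % 2 = 0 := by omega
          by_cases hEx : ExistsMarkedAt (ggMarked l) (y.1 + 2) (b + 1)
          · have := h2.2 hEx; omega
          · have hbound := h2.1 hEx
            have hz2 : z.1 = y.1 + 2 := by omega
            obtain ⟨ov₂, hpart⟩ := hsmark (b+1) (by omega) (by omega)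
            exact absurd (⟨((x.1 - 1, ov₂), b+1), hpart, by simp only; omega, rfl⟩ :
              ExistsMarkedAt (ggMarked l) (y.1 + 2) (b + 1)) hEx
  constructor
  · intro b c x y hb hc hx hy
    rcases Nat.lt_trichotomy b c with hlt | heq | hgt
    · have := key (c - b - 1) b c y x hc hy (by omega) hb
      omega
    · exact heq
    · have := key (b - c - 1) c b x y hb hx (by omega) hc
      omega
  · intro d x h0 hd hh0 hodd
    rcases Nat.eq_zero_or_pos d with rfl | hdpos
    · rw [hd] at hh0
      cases hh0
      omega
    · have := key (d - 1) 0 d x h0 hd hodd (by omega) hh0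
      omega
end
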